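/- arXiv:1912.12449 — 4 statements merged into one kernel-verified Lean document; each statement's English description precedes it below -/
import Mathlib

section
/- Let M be a matroid on a finite set E with rank function r and let F_1, …, F_m ⊆ E. Suppose there exists a base B of M with |B ∩ F_i| = r(F_i) for all i ∈ {1,…,m}, and suppose moreover that every element of E belongs to at least one such base. Then every member of the lattice closure of {F_1, …, F_m} in the lattice of subsets of E (the smallest collection of subsets of E containing F_1, …, F_m and closed under pairwise unions and pairwise intersections) is a flat of M. -/
open Finset

/-- A (finite) matroid on a finite ground set `E`, given by a submodular rank function,
following the matroid rank axioms (R1)-(R3). -/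
structure FinMatroid (α : Type*) [DecidableEq α] where
  E : Finset α
  r : Finset α → ℕ
  r_le_card : ∀ ⦃A : Finset α⦄, A ⊆ E → r A ≤ A.card
  r_mono : ∀ ⦃A B : Finset α⦄, A ⊆ B → B ⊆ E → r A ≤ r B
  r_submod : ∀ ⦃A B : Finset α⦄, A ⊆ E → B ⊆ E → r (A ∪ B) + r (A ∩ B) ≤ r A + r B

namespace FinMatroid

variable {α : Type*} [DecidableEq α]

/-- A set is independent if it is a subset of the ground set whose rank is its cardinality. -/
def Indep (M : FinMatroid α) (A : Finset α) : Prop :=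
  A ⊆ M.E ∧ M.r A = A.card

/-- A base is a maximal independent set. -/
def Base (M : FinMatroid α) (B : Finset α) : Prop :=
  M.Indep B ∧ ∀ ⦃A : Finset α⦄, M.Indep A → B ⊆ A → A = B

/-- A basis of `A` is a maximal independent subset of `A`. -/
def BasisOf (M : FinMatroid α) (I A : Finset α) : Prop :=
  I ⊆ A ∧ M.Indep I ∧ ∀ ⦃J : Finset α⦄, J ⊆ A → M.Indep J → I ⊆ J → J = I

/-- A flat is a set `F` with `F = {s ∈ E : r (F ∪ {s}) = r F}`. -/
def Flat (M : FinMatroid α) (F : Finset α) : Prop :=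
  F = M.E.filter (fun s => M.r (F ∪ {s}) = M.r F)

/-- A matroid is loopless if every singleton of the ground set has rank one. -/
def Loopless (M : FinMatroid α) : Prop :=
  ∀ s ∈ M.E, M.r {s} = 1

/-- The restriction `M|A` of `M` to `A`. -/
def restrict (M : FinMatroid α) (A : Finset α) : FinMatroid α where
  E := A ∩ M.E
  r := M.r
  r_le_card := fun _ h => M.r_le_card (h.trans inter_subset_right)
  r_mono := fun _ _ h h' => M.r_mono h (h'.trans inter_subset_right)
  r_submod := fun _ _ h h' =>
    M.r_submod (h.trans inter_subset_right) (h'.trans inter_subset_right)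

/-- The contraction `M/C` of `C` in `M`, with rank function `A ↦ r (A ∪ C) - r C`. -/
def contract (M : FinMatroid α) (C : Finset α) : FinMatroid α where
  E := M.E \ C
  r := fun A => M.r (A ∪ C ∩ M.E) - M.r (C ∩ M.E)
  r_le_card := by
    intro A hA
    have hAE : A ⊆ M.E := hA.trans sdiff_subset
    have hc : C ∩ M.E ⊆ M.E := inter_subset_right
    have h1 := M.r_submod hAE hc
    have h2 := M.r_le_card hAE
    beta_reduce
    omega
  r_mono := by
    intro A B hAB hB
    have hBE : B ⊆ M.E := hB.trans sdiff_subset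
    have hc : C ∩ M.E ⊆ M.E := inter_subset_right
    have h1 : M.r (A ∪ C ∩ M.E) ≤ M.r (B ∪ C ∩ M.E) :=
      M.r_mono (union_subset_union hAB (Finset.Subset.refl _)) (union_subset hBE hc)
    beta_reduce
    omega
  r_submod := by
    intro A B hA hB
    have hAE : A ⊆ M.E := hA.trans sdiff_subset
    have hBE : B ⊆ M.E := hB.trans sdiff_subset
    have hc : C ∩ M.E ⊆ M.E := inter_subset_right
    have hAc : A ∪ C ∩ M.E ⊆ M.E := union_subset hAE hc
    have hBc : B ∪ C ∩ M.E ⊆ M.E := union_subset hBE hc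
    have h1 := M.r_submod hAc hBc
    have e1 : (A ∪ C ∩ M.E) ∪ (B ∪ C ∩ M.E) = (A ∪ B) ∪ C ∩ M.E := by
      ext x; simp only [Finset.mem_union, Finset.mem_inter]; tauto
    have e2 : (A ∪ C ∩ M.E) ∩ (B ∪ C ∩ M.E) = (A ∩ B) ∪ C ∩ M.E := by
      ext x; simp only [Finset.mem_union, Finset.mem_inter]; tauto
    rw [e1, e2] at h1
    have hABc : (A ∩ B) ∪ C ∩ M.E ⊆ M.E := union_subset (inter_subset_left.trans hAE) hc
    have hABc' : (A ∪ B) ∪ C ∩ M.E ⊆ M.E := union_subset (union_subset hAE hBE) hc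
    have h2 : M.r (C ∩ M.E) ≤ M.r ((A ∩ B) ∪ C ∩ M.E) := M.r_mono subset_union_right hABc
    have h3 : M.r (C ∩ M.E) ≤ M.r (A ∪ C ∩ M.E) := M.r_mono subset_union_right hAc
    have h4 : M.r (C ∩ M.E) ≤ M.r (B ∪ C ∩ M.E) := M.r_mono subset_union_right hBc
    have h5 : M.r (C ∩ M.E) ≤ M.r ((A ∪ B) ∪ C ∩ M.E) := M.r_mono subset_union_right hABc'
    beta_reduce
    omega

/-- `A` is a separator of `M` if `r A + r (E \ A) = r E`. -/
def Separator (M : FinMatroid α) (A : Finset α) : Prop :=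
  A ⊆ M.E ∧ M.r A + M.r (M.E \ A) = M.r M.E

/-- `M` is connected (inseparable) if its ground set is nonempty and its only
separators are `∅` and `E`. -/
def Connected (M : FinMatroid α) : Prop :=
  M.E.Nonempty ∧ ∀ A : Finset α, M.Separator A → A = ∅ ∨ A = M.E

/-- For connected `M`, a set `∅ ≠ F ⊊ E` is non-degenerate if both `M|F` and `M/F`
are connected. -/
def Nondegenerate (M : FinMatroid α) (F : Finset α) : Prop :=
  F ≠ ∅ ∧ F ⊂ M.E ∧ (M.restrict F).Connected ∧ (M.contract F).Connected

end FinMatroid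

noncomputable section

open FinMatroid

/-- The indicator (incidence) vector `1^A ∈ ℝ^α` of a finite set `A`. -/
def indicatorVec {α : Type*} [DecidableEq α] (A : Finset α) : α → ℝ :=
  fun i => if i ∈ A then 1 else 0

/-- The base polytope of a matroid: the convex hull of the indicator vectors of its bases. -/
def basePolytope {α : Type*} [DecidableEq α] (M : FinMatroid α) : Set (α → ℝ) :=
  convexHull ℝ {x | ∃ B : Finset α, M.Base B ∧ x = indicatorVec B}

/-- `Q` is a face of `P`: either `∅`, or `P` itself, or the subset of `P` where some
linear functional attains its maximum over `P` (an exposed face). -/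
def IsFaceOf {α : Type*} (P Q : Set (α → ℝ)) : Prop :=
  Q = ∅ ∨ Q = P ∨ ∃ ℓ : (α → ℝ) →ₗ[ℝ] ℝ, Q = {x ∈ P | ∀ y ∈ P, ℓ y ≤ ℓ x}

/-- The dimension of a convex set: the dimension of the direction of its affine span. -/
def sdim {α : Type*} (Q : Set (α → ℝ)) : ℕ :=
  Module.finrank ℝ (affineSpan ℝ Q).direction

end

/-- The lattice closure of a family of finite sets: the smallest family containing it that is
closed under pairwise unions and pairwise intersections. -/
inductive finsetLatticeClosure {α : Type*} [DecidableEq α] (𝒜 : Set (Finset α)) : Finset α → Prop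
  | base {A : Finset α} : A ∈ 𝒜 → finsetLatticeClosure 𝒜 A
  | union {A B : Finset α} : finsetLatticeClosure 𝒜 A → finsetLatticeClosure 𝒜 B → finsetLatticeClosure 𝒜 (A ∪ B)
  | inter {A B : Finset α} : finsetLatticeClosure 𝒜 A → finsetLatticeClosure 𝒜 B → finsetLatticeClosure 𝒜 (A ∩ B)

lemma FinMatroid.indep_subset' {α : Type*} [DecidableEq α] {M : FinMatroid α} {I J : Finset α}
    (hI : M.Indep I) (hJI : J ⊆ I) : M.Indep J := by
  obtain ⟨hIE, hIr⟩ := hI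
  have hJE : J ⊆ M.E := hJI.trans hIE
  refine ⟨hJE, le_antisymm (M.r_le_card hJE) ?_⟩
  have hsd : I \ J ⊆ M.E := sdiff_subset.trans hIE
  have h1 := M.r_submod hJE hsd
  rw [Finset.union_sdiff_of_subset hJI, Finset.inter_sdiff_self] at h1
  have h2 : M.r (I \ J) ≤ (I \ J).card := M.r_le_card hsd
  have h3 : (I \ J).card = I.card - J.card := Finset.card_sdiff_of_subset hJI
  have h4 : J.card ≤ I.card := Finset.card_le_card hJI
  omega

lemma FinMatroid.indep_card_le_r {α : Type*} [DecidableEq α] {M : FinMatroid α} {I X : Finset α}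
    (hI : M.Indep I) (hIX : I ⊆ X) (hXE : X ⊆ M.E) : I.card ≤ M.r X :=
  hI.2 ▸ M.r_mono hIX hXE

lemma FinMatroid.key {α : Type*} [DecidableEq α] {M : FinMatroid α} {B X Y : Finset α}
    (hB : M.Indep B) (hX : X ⊆ M.E) (hY : Y ⊆ M.E)
    (hx : (B ∩ X).card = M.r X) (hy : (B ∩ Y).card = M.r Y) :
    (B ∩ (X ∪ Y)).card = M.r (X ∪ Y) ∧ (B ∩ (X ∩ Y)).card = M.r (X ∩ Y) := by
  have hsub := M.r_submod hX hY
  have h1 : (B ∩ (X ∪ Y)).card ≤ M.r (X ∪ Y) :=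
    FinMatroid.indep_card_le_r (FinMatroid.indep_subset' hB inter_subset_left)
      inter_subset_right (union_subset hX hY)
  have h2 : (B ∩ (X ∩ Y)).card ≤ M.r (X ∩ Y) :=
    FinMatroid.indep_card_le_r (FinMatroid.indep_subset' hB inter_subset_left)
      inter_subset_right (inter_subset_left.trans hX)
  have hcard : (B ∩ X).card + (B ∩ Y).card
      = (B ∩ (X ∪ Y)).card + (B ∩ (X ∩ Y)).card := by
    rw [Finset.inter_union_distrib_left, Finset.inter_inter_distrib_left]
    exact (Finset.card_union_add_card_inter (B ∩ X) (B ∩ Y)).symm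
  omega

/-- If there is a base `B` with `|B ∩ F i| = r (F i)` for all `i`, and every
element of `E` lies in at least one such base, then every member of the lattice closure of
`{F 1, …, F m}` under pairwise unions and intersections is a flat of `M`. -/
theorem statement8 {α : Type*} [DecidableEq α] {m : ℕ} (M : FinMatroid α)
    (F : Fin m → Finset α) (hF : ∀ i, F i ⊆ M.E)
    (hexists : ∃ B : Finset α, M.Base B ∧ ∀ i, (B ∩ F i).card = M.r (F i))
    (hcover : ∀ x ∈ M.E, ∃ B : Finset α, M.Base B ∧
      (∀ i, (B ∩ F i).card = M.r (F i)) ∧ x ∈ B)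
    (A : Finset α) (hA : finsetLatticeClosure (Set.range F) A) :
    M.Flat A := by
  -- Invariant: A ⊆ E and every good base meets A in r A elements.
  have hinv : A ⊆ M.E ∧ ∀ B : Finset α, M.Base B →
      (∀ i, (B ∩ F i).card = M.r (F i)) → (B ∩ A).card = M.r A := by
    induction hA with
    | base hmem =>
      obtain ⟨i, rfl⟩ := hmem
      exact ⟨hF i, fun B _ hgood => hgood i⟩
    | union hA1 hA2 ih1 ih2 =>
      refine ⟨union_subset ih1.1 ih2.1, fun B hB hgood => ?_⟩
      exact (FinMatroid.key hB.1 ih1.1 ih2.1 (ih1.2 B hB hgood) (ih2.2 B hB hgood)).1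
    | inter hA1 hA2 ih1 ih2 =>
      refine ⟨inter_subset_left.trans ih1.1, fun B hB hgood => ?_⟩
      exact (FinMatroid.key hB.1 ih1.1 ih2.1 (ih1.2 B hB hgood) (ih2.2 B hB hgood)).2
  obtain ⟨hAE, hmeet⟩ := hinv
  unfold FinMatroid.Flat
  ext s
  simp only [Finset.mem_filter]
  constructor
  · intro hs
    refine ⟨hAE hs, ?_⟩
    have : A ∪ {s} = A := by
      rw [Finset.union_eq_left]; simpa using hs
    rw [this]
  · rintro ⟨hsE, hr⟩
    by_contra hsA
    obtain ⟨B, hB, hgood, hsB⟩ := hcover s hsE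
    have hBA := hmeet B hB hgood
    have hJB : (B ∩ A) ∪ {s} ⊆ B := by
      refine union_subset inter_subset_left ?_
      simpa using hsB
    have hJind : M.Indep ((B ∩ A) ∪ {s}) := FinMatroid.indep_subset' hB.1 hJB
    have hJsub : (B ∩ A) ∪ {s} ⊆ A ∪ {s} :=
      union_subset (inter_subset_right.trans subset_union_left) subset_union_right
    have hle : ((B ∩ A) ∪ {s}).card ≤ M.r (A ∪ {s}) :=
      FinMatroid.indep_card_le_r hJind hJsub
        (union_subset hAE (by simpa using hsE))
    have hcard : ((B ∩ A) ∪ {s}).card = (B ∩ A).card + 1 := by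
      rw [Finset.union_comm, ← Finset.insert_eq, Finset.card_insert_of_notMem (by simp [hsA])]
    omega
end

section
/- Let M be a connected loopless matroid on a finite set E. Then every flat F of M with ∅ ≠ F ⊊ E belongs to the lattice closure (the smallest family of subsets of E closed under pairwise unions and pairwise intersections) of the collection of non-degenerate flats of M. In particular, the lattice of flats of M can be set-theoretically recovered from the collection of its non-degenerate flats. -/
open Finset

namespace FinMatroid

variable {α : Type*} [DecidableEq α] (M : FinMatroid α)

lemma r_empty : M.r ∅ = 0 :=
  Nat.le_zero.mp ((M.r_le_card (empty_subset _)).trans (by simp))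

lemma restrict_E (A : Finset α) : (M.restrict A).E = A ∩ M.E := rfl
lemma restrict_r (A X : Finset α) : (M.restrict A).r X = M.r X := rfl
lemma contract_E (A : Finset α) : (M.contract A).E = M.E \ A := rfl
lemma contract_r (A X : Finset α) :
    (M.contract A).r X = M.r (X ∪ A ∩ M.E) - M.r (A ∩ M.E) := rfl

lemma r_union_singleton_le {A : Finset α} {s : α} (hA : A ⊆ M.E) (hs : s ∈ M.E) :
    M.r (A ∪ {s}) ≤ M.r A + 1 := by
  have h := M.r_submod hA (singleton_subset_iff.mpr hs)
  have h2 := M.r_le_card (singleton_subset_iff.mpr hs)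
  simp only [card_singleton] at h2
  omega

lemma flat_subset {F : Finset α} (h : M.Flat F) : F ⊆ M.E := by
  conv_lhs => rw [h]
  exact filter_subset _ _

lemma flat_insert {F : Finset α} (h : M.Flat F) {s : α} (hs : s ∈ M.E) (hsF : s ∉ F) :
    M.r (F ∪ {s}) = M.r F + 1 := by
  have hFE := M.flat_subset h
  have hne : ¬ M.r (F ∪ {s}) = M.r F := by
    intro he
    apply hsF
    have h' := Finset.ext_iff.mp h s
    exact h'.mpr (mem_filter.mpr ⟨hs, he⟩)
  have h1 : M.r F ≤ M.r (F ∪ {s}) :=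
    M.r_mono subset_union_left (union_subset hFE (singleton_subset_iff.mpr hs))
  have h2 := M.r_union_singleton_le hFE hs
  omega

lemma flat_of {G : Finset α} (hG : G ⊆ M.E)
    (h : ∀ s ∈ M.E, s ∉ G → M.r (G ∪ {s}) ≠ M.r G) : M.Flat G := by
  unfold Flat
  ext s
  simp only [mem_filter]
  constructor
  · intro hs
    refine ⟨hG hs, ?_⟩
    rw [union_eq_left.mpr (singleton_subset_iff.mpr hs)]
  · rintro ⟨hsE, he⟩
    by_contra hsG
    exact h s hsE hsG he

lemma sep_add {G A X Y : Finset α} (hG : G ⊆ M.E) (hA : A ⊆ G)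
    (hsep : M.r A + M.r (G \ A) = M.r G)
    (hX : X ⊆ A) (hY : Y ⊆ G \ A) :
    M.r (X ∪ Y) = M.r X + M.r Y := by
  have hAE : A ⊆ M.E := hA.trans hG
  have hXE : X ⊆ M.E := hX.trans hAE
  have hGA : G \ A ⊆ M.E := sdiff_subset.trans hG
  have hYE : Y ⊆ M.E := hY.trans hGA
  have s1 := M.r_submod hAE (union_subset hXE hGA)
  have e1 : A ∪ (X ∪ (G \ A)) = G := by
    ext x
    have h1 : x ∈ X → x ∈ A := fun h => hX h
    have h2 : x ∈ A → x ∈ G := fun h => hA h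
    simp only [mem_union, mem_sdiff]
    tauto
  have e2 : A ∩ (X ∪ (G \ A)) = X := by
    ext x
    have h1 : x ∈ X → x ∈ A := fun h => hX h
    simp only [mem_union, mem_inter, mem_sdiff]
    tauto
  rw [e1, e2] at s1
  have s2 := M.r_submod hXE hGA
  have e3 : X ∩ (G \ A) = ∅ := by
    ext x
    have h1 : x ∈ X → x ∈ A := fun h => hX h
    simp only [mem_inter, mem_sdiff, notMem_empty, iff_false]
    tauto
  rw [e3, M.r_empty] at s2
  have s3 := M.r_submod (union_subset hXE hYE) hGA
  have e4 : (X ∪ Y) ∪ (G \ A) = X ∪ (G \ A) := by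
    ext x
    have h1 : x ∈ Y → x ∈ G \ A := fun h => hY h
    simp only [mem_union, mem_sdiff] at *
    tauto
  have e5 : (X ∪ Y) ∩ (G \ A) = Y := by
    ext x
    have h1 : x ∈ Y → x ∈ G ∧ x ∉ A := fun h => mem_sdiff.mp (hY h)
    have h2 : x ∈ X → x ∈ A := fun h => hX h
    simp only [mem_union, mem_inter, mem_sdiff]
    tauto
  rw [e4, e5] at s3
  have s4 := M.r_submod hXE hYE
  have e6 : X ∩ Y = ∅ := by
    ext x
    have h1 : x ∈ Y → x ∈ G ∧ x ∉ A := fun h => mem_sdiff.mp (hY h)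
    have h2 : x ∈ X → x ∈ A := fun h => hX h
    simp only [mem_inter, notMem_empty, iff_false]
    tauto
  rw [e6, M.r_empty] at s4
  omega

lemma flat_piece {F A : Finset α} (hloop : M.Loopless) (hF : M.Flat F)
    (hA : A ⊆ F) (hsep : M.r A + M.r (F \ A) = M.r F) : M.Flat A := by
  have hFE := M.flat_subset hF
  have hAE : A ⊆ M.E := hA.trans hFE
  apply M.flat_of hAE
  intro s hsE hsA he
  by_cases hsF : s ∈ F
  · have s1 := M.r_submod (union_subset hAE (singleton_subset_iff.mpr hsE))
      (show F \ A ⊆ M.E from sdiff_subset.trans hFE)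
    have e1 : (A ∪ {s}) ∪ (F \ A) = F := by
      ext x
      have h1 : x ∈ A → x ∈ F := fun h => hA h
      simp only [mem_union, mem_sdiff, mem_singleton]
      constructor
      · rintro ((h | rfl) | h)
        · exact h1 h
        · exact hsF
        · exact h.1
      · intro h
        by_cases hx : x ∈ A
        · tauto
        · tauto
    have e2 : (A ∪ {s}) ∩ (F \ A) = {s} := by
      ext x
      simp only [mem_union, mem_inter, mem_sdiff, mem_singleton]
      constructor
      · rintro ⟨h | rfl, h2⟩
        · exact absurd h h2.2
        · rfl
      · rintro rfl
        exact ⟨Or.inr rfl, hsF, hsA⟩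
    rw [e1, e2, hloop s hsE] at s1
    omega
  · have s1 := M.r_submod (union_subset hAE (singleton_subset_iff.mpr hsE))
      (show F \ A ⊆ M.E from sdiff_subset.trans hFE)
    have e1 : (A ∪ {s}) ∪ (F \ A) = F ∪ {s} := by
      ext x
      have h1 : x ∈ A → x ∈ F := fun h => hA h
      simp only [mem_union, mem_sdiff, mem_singleton]
      constructor
      · rintro ((h | rfl) | h)
        · exact Or.inl (h1 h)
        · exact Or.inr rfl
        · exact Or.inl h.1
      · rintro (h | rfl)
        · by_cases hx : x ∈ A <;> tauto
        · tauto
    have e2 : (A ∪ {s}) ∩ (F \ A) = ∅ := by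
      ext x
      simp only [mem_union, mem_inter, mem_sdiff, mem_singleton, notMem_empty, iff_false]
      rintro ⟨h | rfl, h2⟩
      · exact h2.2 h
      · exact hsF h2.1
    rw [e1, e2, M.r_empty] at s1
    have h2 := M.flat_insert hF hsE hsF
    omega

lemma L1 {F C X : Finset α} (hF : F ⊆ M.E) (hC : C ⊆ M.E \ F)
    (hsep : M.r (C ∪ F) + M.r (M.E \ C) = M.r M.E + M.r F)
    (hX : X ⊆ C) :
    M.r (X ∪ (M.E \ C)) + M.r F = M.r (X ∪ F) + M.r (M.E \ C) := by
  have hCE : C ⊆ M.E := hC.trans sdiff_subset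
  have hXE : X ⊆ M.E := hX.trans hCE
  have hdisj : ∀ x, x ∈ F → x ∉ C := fun x hx hc => (mem_sdiff.mp (hC hc)).2 hx
  have s1 := M.r_submod (union_subset hXE hF) (show M.E \ C ⊆ M.E from sdiff_subset)
  have e1 : (X ∪ F) ∪ (M.E \ C) = X ∪ (M.E \ C) := by
    ext x
    have h1 : x ∈ X → x ∈ C := fun h => hX h
    have h2 : x ∈ F → x ∈ M.E ∧ x ∉ C := fun h => ⟨hF h, hdisj x h⟩
    simp only [mem_union, mem_sdiff]
    tauto
  have e2 : (X ∪ F) ∩ (M.E \ C) = F := by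
    ext x
    have h1 : x ∈ X → x ∈ C := fun h => hX h
    have h2 : x ∈ F → x ∈ M.E ∧ x ∉ C := fun h => ⟨hF h, hdisj x h⟩
    simp only [mem_union, mem_inter, mem_sdiff]
    tauto
  rw [e1, e2] at s1
  have s2 := M.r_submod (union_subset hCE hF) (union_subset hXE (show M.E \ C ⊆ M.E from sdiff_subset))
  have e3 : (C ∪ F) ∪ (X ∪ (M.E \ C)) = M.E := by
    ext x
    have h1 : x ∈ X → x ∈ C := fun h => hX h
    have h2 : x ∈ F → x ∈ M.E := fun h => hF h
    have h3 : x ∈ C → x ∈ M.E := fun h => hCE h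
    simp only [mem_union, mem_sdiff]
    constructor
    · rintro (((h|h)|(h|h))) <;> tauto
    · intro h
      by_cases hx : x ∈ C <;> tauto
  have e4 : (C ∪ F) ∩ (X ∪ (M.E \ C)) = X ∪ F := by
    ext x
    have h1 : x ∈ X → x ∈ C := fun h => hX h
    have h2 : x ∈ F → x ∈ M.E ∧ x ∉ C := fun h => ⟨hF h, hdisj x h⟩
    simp only [mem_union, mem_inter, mem_sdiff]
    tauto
  rw [e3, e4] at s2
  omega

lemma flatG {F C : Finset α} (hF : M.Flat F) (hC : C ⊆ M.E \ F)
    (hsep : M.r (C ∪ F) + M.r (M.E \ C) = M.r M.E + M.r F) :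
    M.Flat (M.E \ C) := by
  apply M.flat_of sdiff_subset
  intro s hsE hsG he
  have hsC : s ∈ C := by
    by_contra hc
    exact hsG (mem_sdiff.mpr ⟨hsE, hc⟩)
  have hL := M.L1 (M.flat_subset hF) hC hsep (singleton_subset_iff.mpr hsC)
  have hins := M.flat_insert hF hsE (fun h => (mem_sdiff.mp (hC hsC)).2 h)
  rw [union_comm ({s} : Finset α) (M.E \ C), union_comm ({s} : Finset α) F] at hL
  omega

lemma Ysep {F C Y : Finset α} (hconn : M.Connected) (hFne : F.Nonempty)
    (hFE : F ⊆ M.E) (hC : C ⊆ M.E \ F)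
    (hsep : M.r (C ∪ F) + M.r (M.E \ C) = M.r M.E + M.r F)
    (hY : Y ⊆ M.E \ C)
    (hFY : F ⊆ (M.E \ C) \ Y)
    (hsepY : M.r Y + M.r ((M.E \ C) \ Y) = M.r (M.E \ C)) :
    Y = ∅ := by
  have hCE : C ⊆ M.E := hC.trans sdiff_subset
  have hYE : Y ⊆ M.E := hY.trans sdiff_subset
  have s1 := M.r_submod (show (M.E \ C) \ Y ⊆ M.E from sdiff_subset.trans sdiff_subset)
    (union_subset hCE hFE)
  have e1 : ((M.E \ C) \ Y) ∪ (C ∪ F) = M.E \ Y := by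
    ext x
    have h1 : x ∈ C → x ∈ M.E ∧ x ∉ Y := fun h => ⟨hCE h, fun hy => (mem_sdiff.mp (hY hy)).2 h⟩
    have h2 : x ∈ F → (x ∈ M.E ∧ x ∉ C) ∧ x ∉ Y := fun h => by
      have := hFY h; simp only [mem_sdiff] at this; exact this
    simp only [mem_union, mem_sdiff]
    by_cases hx : x ∈ C <;> tauto
  have e2 : ((M.E \ C) \ Y) ∩ (C ∪ F) = F := by
    ext x
    have h2 : x ∈ F → (x ∈ M.E ∧ x ∉ C) ∧ x ∉ Y := fun h => by
      have := hFY h; simp only [mem_sdiff] at this; exact this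
    simp only [mem_union, mem_inter, mem_sdiff]
    tauto
  rw [e1, e2] at s1
  have s2 := M.r_submod hYE (show M.E \ Y ⊆ M.E from sdiff_subset)
  have e3 : Y ∪ (M.E \ Y) = M.E := by
    ext x
    have h1 : x ∈ Y → x ∈ M.E := fun h => hYE h
    simp only [mem_union, mem_sdiff]
    constructor
    · rintro (h|h) <;> tauto
    · intro h; by_cases hx : x ∈ Y <;> tauto
  have e4 : Y ∩ (M.E \ Y) = ∅ := by
    ext x
    simp only [mem_inter, mem_sdiff, notMem_empty, iff_false]
    tauto
  rw [e3, e4, M.r_empty] at s2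
  rcases hconn.2 Y ⟨hYE, by omega⟩ with h | h
  · exact h
  · exfalso
    obtain ⟨x, hx⟩ := hFne
    have hx2 := mem_sdiff.mp (hFY hx)
    exact hx2.2 (h ▸ hFE hx)

lemma restConn {F C : Finset α} (hconn : M.Connected) (hFne : F.Nonempty)
    (hFE : F ⊆ M.E) (hrc : (M.restrict F).Connected) (hC : C ⊆ M.E \ F)
    (hsep : M.r (C ∪ F) + M.r (M.E \ C) = M.r M.E + M.r F) :
    (M.restrict (M.E \ C)).Connected := by
  have hG : M.E \ C ⊆ M.E := sdiff_subset
  have hEG : (M.E \ C) ∩ M.E = M.E \ C := inter_eq_left.mpr hG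
  have hFG : F ⊆ M.E \ C :=
    fun x hx => mem_sdiff.mpr ⟨hFE hx, fun hc => (mem_sdiff.mp (hC hc)).2 hx⟩
  have hFEq : F ∩ M.E = F := inter_eq_left.mpr hFE
  constructor
  · rw [restrict_E, hEG]
    exact hFne.mono hFG
  · intro Y hYsep
    obtain ⟨hY, hYeq⟩ := hYsep
    rw [restrict_E, hEG] at hY
    rw [restrict_r, restrict_r, restrict_r, restrict_E, hEG] at hYeq
    rw [restrict_E, hEG]
    -- F ∩ Y is a separator of M|F
    have hFsplit : M.r F = M.r (F ∩ Y) + M.r (F \ Y) := by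
      have e : (F ∩ Y) ∪ (F \ Y) = F := by
        ext x
        simp only [mem_union, mem_inter, mem_sdiff]
        constructor
        · rintro (h|h) <;> tauto
        · intro h; by_cases hx : x ∈ Y <;> tauto
      conv_lhs => rw [← e]
      exact M.sep_add hG hY hYeq inter_subset_right
        (fun x hx => mem_sdiff.mpr ⟨hFG (mem_sdiff.mp hx).1, (mem_sdiff.mp hx).2⟩)
    have hFYsep : (M.restrict F).Separator (F ∩ Y) := by
      refine ⟨?_, ?_⟩
      · rw [restrict_E, hFEq]; exact inter_subset_left
      · rw [restrict_r, restrict_r, restrict_r, restrict_E, hFEq]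
        have e : F \ (F ∩ Y) = F \ Y := by
          ext x; simp only [mem_sdiff, mem_inter]; tauto
        rw [e]
        omega
    rcases hrc.2 (F ∩ Y) hFYsep with h | h
    · -- F ∩ Y = ∅, so F ⊆ (E\C)\Y, Y is trivial
      left
      refine M.Ysep hconn hFne hFE hC hsep hY ?_ hYeq
      intro x hx
      refine mem_sdiff.mpr ⟨hFG hx, fun hy => ?_⟩
      have : x ∈ F ∩ Y := mem_inter.mpr ⟨hx, hy⟩
      rw [h] at this
      exact notMem_empty x this
    · -- F ⊆ Y
      right
      rw [restrict_E, hFEq] at h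
      have hFsubY : F ⊆ Y := by
        intro x hx
        have : x ∈ F ∩ Y := by rw [h]; exact hx
        exact (mem_inter.mp this).2
      have hXeq : (M.E \ C) \ ((M.E \ C) \ Y) = Y := by
        ext x
        have h1 : x ∈ Y → x ∈ M.E ∧ x ∉ C := fun h => mem_sdiff.mp (hY h)
        simp only [mem_sdiff]
        constructor
        · intro hh
          by_contra hy
          exact hh.2 ⟨hh.1, hy⟩
        · intro hy
          exact ⟨h1 hy, fun hh => hh.2 hy⟩
      have hXsep : M.r ((M.E \ C) \ Y) + M.r ((M.E \ C) \ ((M.E \ C) \ Y)) = M.r (M.E \ C) := by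
        rw [hXeq]; omega
      have hX0 : (M.E \ C) \ Y = ∅ :=
        M.Ysep hconn hFne hFE hC hsep (show (M.E \ C) \ Y ⊆ M.E \ C from sdiff_subset)
          (by rw [hXeq]; exact hFsubY) hXsep
      have : M.E \ C ⊆ Y := sdiff_eq_empty_iff_subset.mp hX0
      exact Subset.antisymm hY this


private lemma aux1 {E F C : Finset α} (hFE : F ⊆ E) (hC : C ⊆ E \ F) :
    ((E \ F) \ C) ∪ F = E \ C := by
  ext x
  have h1 : x ∈ F → x ∈ E := fun h => hFE h
  have h2 : x ∈ F → x ∉ C := fun hf hc => (mem_sdiff.mp (hC hc)).2 hf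
  have h3 : x ∈ C → x ∈ E := fun h => (mem_sdiff.mp (hC h)).1
  simp only [mem_union, mem_sdiff]
  by_cases hx : x ∈ F <;> by_cases hx2 : x ∈ C <;> tauto

private lemma aux2 {E F C : Finset α} (hFE : F ⊆ E) (hC : C ⊆ E \ F) :
    E \ ((E \ F) \ C) = C ∪ F := by
  ext x
  have h1 : x ∈ F → x ∈ E := fun h => hFE h
  have h3 : x ∈ C → x ∈ E := fun h => (mem_sdiff.mp (hC h)).1
  simp only [mem_union, mem_sdiff]
  by_cases hx : x ∈ F <;> by_cases hx2 : x ∈ C <;> tauto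

private lemma aux3 {E F C : Finset α} (hFE : F ⊆ E) (hC : C ⊆ E \ F) :
    F = (E \ C) ∩ (E \ ((E \ F) \ C)) := by
  ext x
  have h1 : x ∈ F → x ∈ E := fun h => hFE h
  have h2 : x ∈ C → x ∈ E ∧ x ∉ F := fun h => mem_sdiff.mp (hC h)
  simp only [mem_inter, mem_sdiff]
  by_cases hx : x ∈ F <;> by_cases hx2 : x ∈ C <;> by_cases hx3 : x ∈ E <;> tauto

lemma contract_sep {F S : Finset α} (hFE : F ⊆ M.E) (hS : S ⊆ M.E \ F) :
    Separator (M.contract F) S ↔ M.r (S ∪ F) + M.r (M.E \ S) = M.r M.E + M.r F := by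
  have hFEq : F ∩ M.E = F := inter_eq_left.mpr hFE
  have hSE : S ⊆ M.E := hS.trans sdiff_subset
  have hFS : F ⊆ M.E \ S := fun x hx =>
    mem_sdiff.mpr ⟨hFE hx, fun hs => (mem_sdiff.mp (hS hs)).2 hx⟩
  have e1 : (M.E \ F) \ S ∪ F = M.E \ S := by
    ext x
    have h1 : x ∈ F → x ∈ M.E ∧ x ∉ S := fun h => mem_sdiff.mp (hFS h)
    simp only [mem_union, mem_sdiff]
    by_cases hx : x ∈ F <;> tauto
  have e2 : (M.E \ F) ∪ F = M.E := by
    ext x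
    have h1 : x ∈ F → x ∈ M.E := fun h => hFE h
    simp only [mem_union, mem_sdiff]
    by_cases hx : x ∈ F <;> tauto
  have m1 : M.r F ≤ M.r (S ∪ F) := M.r_mono subset_union_right (union_subset hSE hFE)
  have m2 : M.r F ≤ M.r (M.E \ S) := M.r_mono hFS sdiff_subset
  have m3 : M.r F ≤ M.r M.E := M.r_mono hFE Finset.Subset.rfl
  unfold Separator
  rw [contract_E]
  simp only [contract_r, hFEq, e1, e2]
  constructor
  · rintro ⟨_, h⟩
    omega
  · intro h
    exact ⟨hS, by omega⟩

lemma contrConn {F C : Finset α} (hFE : F ⊆ M.E) (hC : C ⊆ M.E \ F) (hCne : C.Nonempty)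
    (hsep : M.r (C ∪ F) + M.r (M.E \ C) = M.r M.E + M.r F)
    (hmin : ∀ D : Finset α, D ⊆ M.E \ F → D.Nonempty → D.card < C.card →
        M.r (D ∪ F) + M.r (M.E \ D) ≠ M.r M.E + M.r F) :
    (M.contract (M.E \ C)).Connected := by
  have hCE : C ⊆ M.E := hC.trans sdiff_subset
  have hGE : M.E \ C ⊆ M.E := sdiff_subset
  have hGEq : (M.E \ C) ∩ M.E = M.E \ C := inter_eq_left.mpr hGE
  have hground : (M.contract (M.E \ C)).E = C := by
    rw [contract_E, sdiff_sdiff_right_self]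
    exact inf_eq_right.mpr hCE
  constructor
  · rw [hground]; exact hCne
  · intro D hDsep
    rw [hground]
    obtain ⟨hD, hDeq⟩ := hDsep
    rw [hground] at hD
    simp only [contract_r, hground, hGEq] at hDeq
    have hDE : D ⊆ M.E := hD.trans hCE
    have eCD : (C \ D) ∪ (M.E \ C) = M.E \ D := by
      ext x
      have h1 : x ∈ C → x ∈ M.E := fun h => hCE h
      have h2 : x ∈ D → x ∈ C := fun h => hD h
      simp only [mem_union, mem_sdiff]
      by_cases hx : x ∈ C <;> tauto
    have eCG : C ∪ (M.E \ C) = M.E := by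
      ext x
      have h1 : x ∈ C → x ∈ M.E := fun h => hCE h
      simp only [mem_union, mem_sdiff]
      by_cases hx : x ∈ C <;> tauto
    rw [eCD, eCG] at hDeq
    have m1 : M.r (M.E \ C) ≤ M.r (D ∪ (M.E \ C)) :=
      M.r_mono subset_union_right (union_subset hDE hGE)
    have m2 : M.r (M.E \ C) ≤ M.r (M.E \ D) :=
      M.r_mono (fun x hx => mem_sdiff.mpr ⟨(mem_sdiff.mp hx).1,
        fun hd => (mem_sdiff.mp hx).2 (hD hd)⟩) sdiff_subset
    have m3 : M.r (M.E \ C) ≤ M.r M.E := M.r_mono hGE Finset.Subset.rfl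
    have hL1 := M.L1 hFE hC hsep hD
    by_contra hcon
    push_neg at hcon
    obtain ⟨hD0, hDC⟩ := hcon
    have hDne : D.Nonempty := hD0
    have hDcard : D.card < C.card := card_lt_card (Finset.ssubset_iff_subset_ne.mpr ⟨hD, hDC⟩)
    exact hmin D (hD.trans hC) hDne hDcard (by omega)

lemma prop1 (hconn : M.Connected) :
    ∀ (n : ℕ) (F : Finset α), (M.E \ F).card ≤ n → M.Flat F → F.Nonempty → F ⊂ M.E →
      (M.restrict F).Connected →
      finsetLatticeClosure {G : Finset α | M.Flat G ∧ M.Nondegenerate G} F := by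
  intro n
  induction n with
  | zero =>
    intro F hcard hflat hne hproper _
    exfalso
    obtain ⟨x, hxE, hxF⟩ := exists_of_ssubset hproper
    have h1 : x ∈ M.E \ F := mem_sdiff.mpr ⟨hxE, hxF⟩
    have := card_pos.mpr ⟨x, h1⟩
    omega
  | succ n ih =>
    intro F hcard hflat hne hproper hrc
    have hFE := M.flat_subset hflat
    by_cases hcc : (M.contract F).Connected
    · exact .base ⟨hflat, hne.ne_empty, hproper, hrc, hcc⟩
    · unfold Connected at hcc
      push_neg at hcc
      have hgne : ((M.contract F).E).Nonempty := by
        rw [contract_E]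
        obtain ⟨x, hxE, hxF⟩ := exists_of_ssubset hproper
        exact ⟨x, mem_sdiff.mpr ⟨hxE, hxF⟩⟩
      obtain ⟨S, hSsep, hS1, hS2⟩ := hcc hgne
      have hSsub : S ⊆ M.E \ F := by
        have := hSsep.1
        rwa [contract_E] at this
      have hSsep' : M.r (S ∪ F) + M.r (M.E \ S) = M.r M.E + M.r F :=
        (M.contract_sep hFE hSsub).mp hSsep
      rw [contract_E] at hS2
      set 𝒮 := (M.E \ F).powerset.filter
        (fun C => C ≠ ∅ ∧ C ≠ M.E \ F ∧
          M.r (C ∪ F) + M.r (M.E \ C) = M.r M.E + M.r F) with h𝒮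
      have h𝒮ne : 𝒮.Nonempty := ⟨S, by
        rw [h𝒮, mem_filter, mem_powerset]
        exact ⟨hSsub, hS1.ne_empty, hS2, hSsep'⟩⟩
      obtain ⟨C, hCmem, hCmin⟩ := 𝒮.exists_min_image card h𝒮ne
      rw [h𝒮, mem_filter, mem_powerset] at hCmem
      obtain ⟨hC, hCne0, hCneEF, hCsep⟩ := hCmem
      have hCne : C.Nonempty := nonempty_iff_ne_empty.mpr hCne0
      have hCE : C ⊆ M.E := hC.trans sdiff_subset
      set C' := (M.E \ F) \ C with hC'def
      have hC' : C' ⊆ M.E \ F := sdiff_subset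
      have hC'E : C' ⊆ M.E := hC'.trans sdiff_subset
      have hC'ne : C'.Nonempty := by
        rw [nonempty_iff_ne_empty]
        intro h0
        exact hCneEF (Finset.Subset.antisymm hC (sdiff_eq_empty_iff_subset.mp h0))
      have eC'F : C' ∪ F = M.E \ C := by
        rw [hC'def]; exact aux1 hFE hC
      have eEC' : M.E \ C' = C ∪ F := by
        rw [hC'def]; exact aux2 hFE hC
      have hC'sep : M.r (C' ∪ F) + M.r (M.E \ C') = M.r M.E + M.r F := by
        rw [eC'F, eEC']
        omega
      have hFsubG1 : F ⊆ M.E \ C := fun x hx =>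
        mem_sdiff.mpr ⟨hFE hx, fun hc => (mem_sdiff.mp (hC hc)).2 hx⟩
      have hG1flat := M.flatG hflat hC hCsep
      have hG1rc := M.restConn hconn hne hFE hrc hC hCsep
      have hG1cc := M.contrConn hFE hC hCne hCsep (by
        intro D hD hDne hDcard hDsep
        have hmem : D ∈ 𝒮 := by
          rw [h𝒮, mem_filter, mem_powerset]
          refine ⟨hD, hDne.ne_empty, ?_, hDsep⟩
          intro h
          rw [h] at hDcard
          have := card_le_card hC
          omega
        have := hCmin D hmem
        omega)
      have hG1nd : M.Nondegenerate (M.E \ C) := by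
        refine ⟨(hne.mono hFsubG1).ne_empty, ?_, hG1rc, hG1cc⟩
        exact sdiff_ssubset hCE hCne
      have hFsubG2 : F ⊆ M.E \ C' := fun x hx =>
        mem_sdiff.mpr ⟨hFE hx, fun hc => (mem_sdiff.mp (hC' hc)).2 hx⟩
      have hG2flat := M.flatG hflat hC' hC'sep
      have hG2rc := M.restConn hconn hne hFE hrc hC' hC'sep
      have hG2card : (M.E \ (M.E \ C')).card ≤ n := by
        have e : M.E \ (M.E \ C') = C' := by
          rw [sdiff_sdiff_right_self]
          exact inf_eq_right.mpr hC'E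
        rw [e]
        have h1 : C' ⊂ M.E \ F := sdiff_ssubset hC hCne
        have := card_lt_card h1
        omega
      have hG2cl := ih (M.E \ C') hG2card hG2flat (hne.mono hFsubG2)
        (sdiff_ssubset hC'E hC'ne) hG2rc
      have hFeq : F = (M.E \ C) ∩ (M.E \ C') := by
        rw [hC'def]; exact aux3 hFE hC
      rw [hFeq]
      exact .inter (.base ⟨hG1flat, hG1nd⟩) hG2cl

lemma main (hconn : M.Connected) (hloop : M.Loopless) :
    ∀ (n : ℕ) (F : Finset α), F.card ≤ n → M.Flat F → F ≠ ∅ → F ⊂ M.E →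
      finsetLatticeClosure {G : Finset α | M.Flat G ∧ M.Nondegenerate G} F := by
  intro n
  induction n with
  | zero =>
    intro F hcard hflat hne _
    exact absurd (card_eq_zero.mp (Nat.le_zero.mp hcard)) hne
  | succ n ih =>
    intro F hcard hflat hne hproper
    have hFE := M.flat_subset hflat
    have hFne : F.Nonempty := nonempty_iff_ne_empty.mpr hne
    by_cases hrc : (M.restrict F).Connected
    · exact M.prop1 hconn (M.E \ F).card F le_rfl hflat hFne hproper hrc
    · unfold Connected at hrc
      push_neg at hrc
      have hFEq : F ∩ M.E = F := inter_eq_left.mpr hFE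
      have hgne : ((M.restrict F).E).Nonempty := by
        rw [restrict_E, hFEq]; exact hFne
      obtain ⟨A, hAsep, hA1, hA2⟩ := hrc hgne
      obtain ⟨hA, hAeq⟩ := hAsep
      rw [restrict_E, hFEq] at hA hA2
      simp only [restrict_r, restrict_E, hFEq] at hAeq
      have hAflat := M.flat_piece hloop hflat hA hAeq
      have hBsub : F \ A ⊆ F := sdiff_subset
      have hBeq : M.r (F \ A) + M.r (F \ (F \ A)) = M.r F := by
        have e : F \ (F \ A) = A := by
          rw [sdiff_sdiff_right_self]
          exact inf_eq_right.mpr hA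
        rw [e]
        omega
      have hBflat := M.flat_piece hloop hflat hBsub hBeq
      have hAne : A.Nonempty := hA1
      have hBne : (F \ A).Nonempty := by
        rw [nonempty_iff_ne_empty]
        intro h0
        exact hA2 (Finset.Subset.antisymm hA (sdiff_eq_empty_iff_subset.mp h0))
      have hAssF : A ⊂ F := Finset.ssubset_iff_subset_ne.mpr ⟨hA, hA2⟩
      have hAcard : A.card ≤ n := by
        have := card_lt_card hAssF
        omega
      have hBssF : F \ A ⊂ F := sdiff_ssubset hA hAne
      have hBcard : (F \ A).card ≤ n := by
        have := card_lt_card hBssF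
        omega
      have hclA := ih A hAcard hAflat hAne.ne_empty
        (Finset.ssubset_of_subset_of_ssubset hA hproper)
      have hclB := ih (F \ A) hBcard hBflat hBne.ne_empty
        (Finset.ssubset_of_subset_of_ssubset hBsub hproper)
      have e : F = A ∪ (F \ A) := (union_sdiff_of_subset hA).symm
      rw [e]
      exact .union hclA hclB

end FinMatroid


/-- For a connected loopless matroid `M`, every flat `∅ ≠ F ⊊ E` lies in
the lattice closure of the collection of non-degenerate flats of `M`. -/
theorem statement9 {α : Type*} [DecidableEq α] (M : FinMatroid α)
    (hconn : M.Connected) (hloop : M.Loopless)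
    (F : Finset α) (hflat : M.Flat F) (hne : F ≠ ∅) (hproper : F ⊂ M.E) :
    finsetLatticeClosure {G : Finset α | M.Flat G ∧ M.Nondegenerate G} F := by
  exact M.main hconn hloop F.card F le_rfl hflat hne hproper
end

section
/- Let M be a connected matroid of rank at least 3 on a finite set S with rank function r, and let F ≠ L be non-degenerate flats of M such that the set Q := {x ∈ BP_M : x(F) = r(F) and x(L) = r(L)} has dimension |S| − 3 and is not contained in any coordinate hyperplane {x ∈ ℝ^S : x(i) = 0} (i ∈ S). Then exactly one of the following holds: F ∩ L = ∅, F ∪ L = S, F ⊊ L, or L ⊊ F. Moreover, if F ∩ L = ∅ then Q = {x ∈ BP_M : x(F ∪ L) = r(F ∪ L)}, and if F ∪ L = S then Q = {x ∈ BP_M : x(F ∩ L) = r(F ∩ L)}. -/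
open Finset

/-- The face `P(F) = {x ∈ BP_M : x(F) = r F}` of the base polytope. -/
noncomputable def facePF {α : Type*} [DecidableEq α] (M : FinMatroid α) (F : Finset α) :
    Set (α → ℝ) :=
  {x ∈ basePolytope M | ∑ i ∈ F, x i = (M.r F : ℝ)}

/-- `Q = {x ∈ BP_M : x(F) = r F and x(L) = r L}`. -/
noncomputable def ridgeQ {α : Type*} [DecidableEq α] (M : FinMatroid α) (F L : Finset α) :
    Set (α → ℝ) :=
  {x ∈ basePolytope M | (∑ i ∈ F, x i = (M.r F : ℝ)) ∧ (∑ i ∈ L, x i = (M.r L : ℝ))}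

section AuxLemmas

open FinMatroid

variable {α : Type*} [DecidableEq α] [Fintype α]

lemma FinMatroid.r_empty_s11 (M : FinMatroid α) : M.r ∅ = 0 := by
  have := M.r_le_card (Finset.empty_subset M.E)
  simpa using this

lemma FinMatroid.indep_subset {M : FinMatroid α} {B A : Finset α} (hB : M.Indep B)
    (hAB : A ⊆ B) : M.r A = A.card := by
  obtain ⟨hBE, hBr⟩ := hB
  have hAE : A ⊆ M.E := hAB.trans hBE
  have hsd : B \ A ⊆ M.E := Finset.sdiff_subset.trans hBE
  have h1 := M.r_submod hAE hsd
  have hU : A ∪ (B \ A) = B := Finset.union_sdiff_of_subset hAB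
  have hI : A ∩ (B \ A) = ∅ := by
    ext x; simp only [Finset.mem_inter, Finset.mem_sdiff, Finset.notMem_empty]; tauto
  rw [hU, hI, M.r_empty_s11] at h1
  have h2 := M.r_le_card hAE
  have h3 := M.r_le_card hsd
  have hcard : (B \ A).card = B.card - A.card := Finset.card_sdiff_of_subset hAB
  have hle : A.card ≤ B.card := Finset.card_le_card hAB
  omega

lemma FinMatroid.base_r_ground {M : FinMatroid α} {B : Finset α} (hB : M.Base B) :
    M.r M.E = B.card := by
  obtain ⟨⟨hBE, hBr⟩, hmax⟩ := hB
  have hstep : ∀ s ∈ M.E, M.r (B ∪ {s}) = M.r B := by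
    intro s hs
    by_cases hsB : s ∈ B
    · congr 1
      rw [Finset.union_eq_left]
      simpa using hsB
    · have hsub := M.r_submod hBE (show {s} ⊆ M.E by simpa using hs)
      have hI : B ∩ {s} = ∅ := by
        ext x
        simp only [Finset.mem_inter, Finset.mem_singleton, Finset.notMem_empty, iff_false,
          not_and]
        rintro h1 rfl; exact hsB h1
      rw [hI, M.r_empty_s11] at hsub
      have hs1 : M.r {s} ≤ 1 := by simpa using M.r_le_card (show {s} ⊆ M.E by simpa using hs)
      have hmono : M.r B ≤ M.r (B ∪ {s}) :=
        M.r_mono Finset.subset_union_left (Finset.union_subset hBE (by simpa using hs))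
      have hne : M.r (B ∪ {s}) ≠ B.card + 1 := by
        intro heq
        have hcard : (B ∪ {s}).card = B.card + 1 := by
          rw [Finset.union_comm, show ({s} : Finset α) ∪ B = insert s B from rfl, Finset.card_insert_of_notMem hsB]
        have hind : M.Indep (B ∪ {s}) :=
          ⟨Finset.union_subset hBE (by simpa using hs), by rw [heq, hcard]⟩
        have := hmax hind Finset.subset_union_left
        have hsmem : s ∈ B := by
          rw [← this]; exact Finset.mem_union_right _ (Finset.mem_singleton_self s)
        exact hsB hsmem
      omega
  have key : ∀ X : Finset α, X ⊆ M.E → M.r (B ∪ X) = M.r B := by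
    intro X
    induction X using Finset.induction_on with
    | empty => intro _; rw [Finset.union_empty]
    | @insert a X ha ih =>
      intro hsub
      have haE : a ∈ M.E := hsub (Finset.mem_insert_self _ _)
      have hXE : X ⊆ M.E := (Finset.subset_insert a X).trans hsub
      have hBX : B ∪ X ⊆ M.E := Finset.union_subset hBE hXE
      have hBa : B ∪ {a} ⊆ M.E := Finset.union_subset hBE (by simpa using haE)
      have hsub2 := M.r_submod hBX hBa
      have hU : (B ∪ X) ∪ (B ∪ {a}) = B ∪ insert a X := by
        ext x
        simp only [Finset.mem_union, Finset.mem_insert, Finset.mem_singleton]; tauto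
      have hB_subI : B ⊆ (B ∪ X) ∩ (B ∪ {a}) := by
        intro x hx; exact Finset.mem_inter.mpr ⟨Finset.mem_union_left _ hx, Finset.mem_union_left _ hx⟩
      have hImono : M.r B ≤ M.r ((B ∪ X) ∩ (B ∪ {a})) :=
        M.r_mono hB_subI ((Finset.inter_subset_left).trans hBX)
      have hUmono : M.r B ≤ M.r (B ∪ insert a X) :=
        M.r_mono Finset.subset_union_left (Finset.union_subset hBE hsub)
      rw [hU] at hsub2
      have h1 := ih hXE
      have h2 := hstep a haE
      omega
  have := key M.E (Finset.Subset.refl _)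
  rw [Finset.union_eq_right.mpr hBE] at this
  rw [this, hBr]

lemma sum_indicator_eq {A B : Finset α} :
    ∑ i ∈ A, indicatorVec B i = ((A ∩ B).card : ℝ) := by
  unfold indicatorVec
  have hfil : A.filter (fun i => i ∈ B) = A ∩ B := by
    ext x; simp [Finset.mem_filter, Finset.mem_inter]
  rw [Finset.sum_boole, hfil]

lemma bp_sum_le {M : FinMatroid α} (hE : M.E = Finset.univ) {x : α → ℝ}
    (hx : x ∈ basePolytope M) (A : Finset α) : ∑ i ∈ A, x i ≤ (M.r A : ℝ) := by
  have hlin : IsLinearMap ℝ (fun y : α → ℝ => ∑ i ∈ A, y i) :=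
    ⟨fun y z => by simp [Finset.sum_add_distrib], fun c y => by simp [Finset.mul_sum]⟩
  have hconv : Convex ℝ {y : α → ℝ | (fun y : α → ℝ => ∑ i ∈ A, y i) y ≤ (M.r A : ℝ)} :=
    convex_halfSpace_le hlin _
  refine convexHull_min ?_ hconv hx
  rintro y ⟨B, hB, rfl⟩
  show ∑ i ∈ A, indicatorVec B i ≤ (M.r A : ℝ)
  rw [sum_indicator_eq]
  have h1 : M.r (A ∩ B) = (A ∩ B).card :=
    FinMatroid.indep_subset hB.1 Finset.inter_subset_right
  have h2 : M.r (A ∩ B) ≤ M.r A :=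
    M.r_mono Finset.inter_subset_left (hE ▸ Finset.subset_univ A)
  exact_mod_cast h1 ▸ h2

lemma bp_sum_univ {M : FinMatroid α} {x : α → ℝ}
    (hx : x ∈ basePolytope M) : ∑ i : α, x i = (M.r M.E : ℝ) := by
  have hlin : IsLinearMap ℝ (fun y : α → ℝ => ∑ i : α, y i) :=
    ⟨fun y z => by simp [Finset.sum_add_distrib], fun c y => by simp [Finset.mul_sum]⟩
  have hconv : Convex ℝ {y : α → ℝ | (fun y : α → ℝ => ∑ i : α, y i) y = (M.r M.E : ℝ)} :=
    convex_hyperplane hlin _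
  refine convexHull_min ?_ hconv hx
  rintro y ⟨B, hB, rfl⟩
  show ∑ i : α, indicatorVec B i = (M.r M.E : ℝ)
  rw [sum_indicator_eq, Finset.univ_inter, FinMatroid.base_r_ground hB]

end AuxLemmas
section AuxLemmas2

open FinMatroid

variable {α : Type*} [DecidableEq α] [Fintype α]

lemma ridge_facts {M : FinMatroid α} (hE : M.E = Finset.univ) {F L : Finset α} {x : α → ℝ}
    (hx : x ∈ ridgeQ M F L) :
    (∑ i ∈ F ∪ L, x i = (M.r (F ∪ L) : ℝ)) ∧ (∑ i ∈ F ∩ L, x i = (M.r (F ∩ L) : ℝ)) ∧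
      M.r F + M.r L = M.r (F ∪ L) + M.r (F ∩ L) := by
  obtain ⟨hxP, hxF, hxL⟩ := hx
  have h1 := bp_sum_le hE hxP (F ∪ L)
  have h2 := bp_sum_le hE hxP (F ∩ L)
  have hsum : ∑ i ∈ F ∪ L, x i + ∑ i ∈ F ∩ L, x i = ∑ i ∈ F, x i + ∑ i ∈ L, x i :=
    Finset.sum_union_inter
  have hsubmod := M.r_submod (hE ▸ Finset.subset_univ F) (hE ▸ Finset.subset_univ L)
  have hsubmod' : (M.r (F ∪ L) : ℝ) + (M.r (F ∩ L) : ℝ) ≤ (M.r F : ℝ) + (M.r L : ℝ) := by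
    exact_mod_cast hsubmod
  rw [hxF, hxL] at hsum
  refine ⟨by linarith, by linarith, ?_⟩
  have hre : (M.r F : ℝ) + (M.r L : ℝ) = (M.r (F ∪ L) : ℝ) + (M.r (F ∩ L) : ℝ) := by linarith
  exact_mod_cast hre

end AuxLemmas2
section AuxLemmas3

open FinMatroid

variable {α : Type*} [DecidableEq α] [Fintype α]

/-- The linear functional `x ↦ ∑ i ∈ A, x i`. -/
noncomputable def sumLin (A : Finset α) : (α → ℝ) →ₗ[ℝ] ℝ where
  toFun x := ∑ i ∈ A, x i
  map_add' x y := by simp [Finset.sum_add_distrib]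
  map_smul' c x := by simp [Finset.mul_sum]

@[simp] lemma sumLin_apply (A : Finset α) (x : α → ℝ) : sumLin A x = ∑ i ∈ A, x i := rfl

lemma sumLin_single (A : Finset α) (e : α) (v : ℝ) :
    sumLin A (Pi.single e v) = if e ∈ A then v else 0 := by
  simp [Pi.single_apply, Finset.sum_ite_eq' A e (fun _ => v)]

lemma crossing_dim {M : FinMatroid α} (hE : M.E = Finset.univ) {F L : Finset α}
    (hdim : sdim (ridgeQ M F L) = Fintype.card α - 3)
    (hIne : F ∩ L ≠ ∅) (hUne : F ∪ L ≠ M.E) (hnFL : ¬ F ⊆ L) (hnLF : ¬ L ⊆ F) : False := by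
  obtain ⟨a, haF, haL⟩ := Finset.not_subset.mp hnFL
  obtain ⟨b, hbL, hbF⟩ := Finset.not_subset.mp hnLF
  obtain ⟨c, hc⟩ := Finset.nonempty_iff_ne_empty.mpr hIne
  obtain ⟨d, hd⟩ : ∃ d, d ∉ F ∪ L := by
    by_contra hcon
    push_neg at hcon
    exact hUne (hE ▸ Finset.eq_univ_iff_forall.mpr hcon)
  have hcF := (Finset.mem_inter.mp hc).1
  have hcL := (Finset.mem_inter.mp hc).2
  have hdF : d ∉ F := fun h => hd (Finset.mem_union_left _ h)
  have hdL : d ∉ L := fun h => hd (Finset.mem_union_right _ h)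
  set T : (α → ℝ) →ₗ[ℝ] (ℝ × ℝ × ℝ × ℝ) :=
    (sumLin F).prod ((sumLin L).prod ((sumLin (F ∩ L)).prod (sumLin Finset.univ))) with hT
  have hTapp : ∀ x : α → ℝ,
      T x = (∑ i ∈ F, x i, ∑ i ∈ L, x i, ∑ i ∈ F ∩ L, x i, ∑ i : α, x i) := fun x => rfl
  have hsurj : Function.Surjective T := by
    rintro ⟨w0, w1, w2, w3⟩
    refine ⟨(w0 - w2) • (Pi.single a 1 : α → ℝ) + (w1 - w2) • (Pi.single b 1 : α → ℝ) +
      w2 • (Pi.single c 1 : α → ℝ) +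
      (w3 - w0 - w1 + w2) • (Pi.single d 1 : α → ℝ), ?_⟩
    have key : ∀ A : Finset α,
        (∑ i ∈ A, ((w0 - w2) • (Pi.single a 1 : α → ℝ) + (w1 - w2) • (Pi.single b 1 : α → ℝ) +
          w2 • (Pi.single c 1 : α → ℝ) +
          (w3 - w0 - w1 + w2) • (Pi.single d 1 : α → ℝ)) i) =
        (w0 - w2) * (if a ∈ A then 1 else 0) + (w1 - w2) * (if b ∈ A then 1 else 0) +
          w2 * (if c ∈ A then 1 else 0) +
          (w3 - w0 - w1 + w2) * (if d ∈ A then 1 else 0) := by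
      intro A
      rw [← sumLin_apply]
      simp only [map_add, map_smul, sumLin_single, smul_eq_mul]
    rw [hTapp]
    simp only [key, haF, haL, hbF, hbL, hcF, hcL, hdF, hdL, Finset.mem_inter,
      Finset.mem_univ, if_true, if_false, and_true, and_false, true_and, false_and,
      if_pos, if_neg, not_false_iff, Prod.mk.injEq]
    norm_num
    ring
  have hranktop : LinearMap.range T = ⊤ := LinearMap.range_eq_top.mpr hsurj
  have hfr := T.finrank_range_add_finrank_ker
  rw [hranktop, finrank_top] at hfr
  have h4 : Module.finrank ℝ (ℝ × ℝ × ℝ × ℝ) = 4 := by simp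
  have hn : Module.finrank ℝ (α → ℝ) = Fintype.card α := by simp
  have hker : (affineSpan ℝ (ridgeQ M F L)).direction ≤ LinearMap.ker T := by
    rw [direction_affineSpan, vectorSpan_def, Submodule.span_le]
    intro v hv
    rw [Set.mem_vsub] at hv
    obtain ⟨x, hx, y, hy, rfl⟩ := hv
    obtain ⟨-, hxI, -⟩ := ridge_facts hE hx
    obtain ⟨-, hyI, -⟩ := ridge_facts hE hy
    obtain ⟨hxP, hxF, hxL⟩ := hx
    obtain ⟨hyP, hyF, hyL⟩ := hy
    have hxE := bp_sum_univ hxP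
    have hyE := bp_sum_univ hyP
    have hTxy : T x = T y := by
      rw [hTapp, hTapp, hxF, hxL, hxI, hxE, hyF, hyL, hyI, hyE]
    simp only [SetLike.mem_coe, LinearMap.mem_ker]
    have hsub : x -ᵥ y = x - y := rfl
    rw [hsub, map_sub, hTxy, sub_self]
  have hmono : Module.finrank ℝ (affineSpan ℝ (ridgeQ M F L)).direction ≤
      Module.finrank ℝ (LinearMap.ker T) := Submodule.finrank_mono hker
  have hcard4 : 4 ≤ Fintype.card α := by
    have hab : a ≠ b := by rintro rfl; exact hbF haF
    have hac : a ≠ c := by rintro rfl; exact haL hcL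
    have had : a ≠ d := by rintro rfl; exact hdF haF
    have hbc : b ≠ c := by rintro rfl; exact hbF hcF
    have hbd : b ≠ d := by rintro rfl; exact hdL hbL
    have hcd : c ≠ d := by rintro rfl; exact hdF hcF
    have hcardset : ({a, b, c, d} : Finset α).card = 4 := by
      rw [Finset.card_insert_of_notMem (by simp [hab, hac, had]),
        Finset.card_insert_of_notMem (by simp [hbc, hbd]),
        Finset.card_insert_of_notMem (by simp [hcd]), Finset.card_singleton]
    calc 4 = ({a, b, c, d} : Finset α).card := hcardset.symm
      _ ≤ Finset.univ.card := Finset.card_le_univ _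
      _ = Fintype.card α := Finset.card_univ
  have hsdim : sdim (ridgeQ M F L) =
      Module.finrank ℝ (affineSpan ℝ (ridgeQ M F L)).direction := rfl
  omega

end AuxLemmas3
/-- For distinct non-degenerate flats `F, L` of a connected matroid of
rank `≥ 3` such that `Q = {x ∈ BP_M : x(F) = r F, x(L) = r L}` has dimension `|S| - 3` and
lies in no coordinate hyperplane, exactly one of `F ∩ L = ∅`, `F ∪ L = S`, `F ⊊ L`,
`L ⊊ F` holds; moreover in the first case `Q = {x ∈ BP_M : x(F ∪ L) = r (F ∪ L)}` and in
the second case `Q = {x ∈ BP_M : x(F ∩ L) = r (F ∩ L)}`. -/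
theorem statement11 {α : Type*} [DecidableEq α] [Fintype α] (M : FinMatroid α)
    (hE : M.E = Finset.univ) (hconn : M.Connected) (hrank : 3 ≤ M.r M.E)
    (F L : Finset α) (hne : F ≠ L)
    (hF : M.Flat F) (hFnd : M.Nondegenerate F)
    (hL : M.Flat L) (hLnd : M.Nondegenerate L)
    (hdim : sdim (ridgeQ M F L) = Fintype.card α - 3)
    (hcoord : ∀ i : α, ¬ ridgeQ M F L ⊆ {x | x i = 0}) :
    ((F ∩ L = ∅ ∧ F ∪ L ≠ M.E ∧ ¬ F ⊂ L ∧ ¬ L ⊂ F) ∨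
     (F ∩ L ≠ ∅ ∧ F ∪ L = M.E ∧ ¬ F ⊂ L ∧ ¬ L ⊂ F) ∨
     (F ∩ L ≠ ∅ ∧ F ∪ L ≠ M.E ∧ F ⊂ L ∧ ¬ L ⊂ F) ∨
     (F ∩ L ≠ ∅ ∧ F ∪ L ≠ M.E ∧ ¬ F ⊂ L ∧ L ⊂ F)) ∧
    (F ∩ L = ∅ → ridgeQ M F L = facePF M (F ∪ L)) ∧
    (F ∪ L = M.E → ridgeQ M F L = facePF M (F ∩ L)) := by
  have hQne : (ridgeQ M F L).Nonempty := by
    by_contra h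
    rw [Set.not_nonempty_iff_eq_empty] at h
    obtain ⟨e, -⟩ := hconn.1
    exact hcoord e (by rw [h]; exact Set.empty_subset _)
  obtain ⟨x0, hx0⟩ := hQne
  obtain ⟨hx0U, hx0I, hmod⟩ := ridge_facts hE hx0
  have hFE : F ⊆ M.E := hE ▸ Finset.subset_univ F
  have hLE : L ⊆ M.E := hE ▸ Finset.subset_univ L
  have hFne : F ≠ ∅ := hFnd.1
  have hLne : L ≠ ∅ := hLnd.1
  have hFneE : F ≠ M.E := hFnd.2.1.ne
  have hLneE : L ≠ M.E := hLnd.2.1.ne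
  have exclA : ¬ (F ∩ L = ∅ ∧ F ∪ L = M.E) := by
    rintro ⟨hI, hU⟩
    have hLdiff : L = M.E \ F := by
      ext x
      simp only [Finset.mem_sdiff]
      constructor
      · intro hx
        refine ⟨hLE hx, fun hxF => ?_⟩
        have hmem : x ∈ F ∩ L := Finset.mem_inter.mpr ⟨hxF, hx⟩
        rw [hI] at hmem
        exact absurd hmem (Finset.notMem_empty x)
      · rintro ⟨hxE, hxF⟩
        have hmem : x ∈ F ∪ L := hU ▸ hxE
        rcases Finset.mem_union.mp hmem with h | h
        · exact absurd h hxF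
        · exact h
    have hsep : M.Separator F := by
      refine ⟨hFE, ?_⟩
      rw [← hLdiff]
      have hmod' := hmod
      rw [hU, hI, M.r_empty_s11] at hmod'
      omega
    rcases hconn.2 F hsep with h | h
    · exact hFne h
    · exact hFneE h
  have mor1 : F ∩ L = ∅ → ridgeQ M F L = facePF M (F ∪ L) := by
    intro hI
    have hr0 : M.r (F ∩ L) = 0 := by rw [hI, M.r_empty_s11]
    ext x
    constructor
    · intro hx
      obtain ⟨hxU, -, -⟩ := ridge_facts hE hx
      exact ⟨hx.1, hxU⟩
    · rintro ⟨hxP, hxU⟩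
      have h1 := bp_sum_le hE hxP F
      have h2 := bp_sum_le hE hxP L
      have hsum : ∑ i ∈ F ∪ L, x i + ∑ i ∈ F ∩ L, x i = ∑ i ∈ F, x i + ∑ i ∈ L, x i :=
        Finset.sum_union_inter
      rw [hI, Finset.sum_empty, add_zero] at hsum
      have hmodR : (M.r F : ℝ) + (M.r L : ℝ) = (M.r (F ∪ L) : ℝ) := by
        exact_mod_cast (by omega : M.r F + M.r L = M.r (F ∪ L))
      exact ⟨hxP, by linarith, by linarith⟩
  have mor2 : F ∪ L = M.E → ridgeQ M F L = facePF M (F ∩ L) := by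
    intro hU
    ext x
    constructor
    · intro hx
      exact ⟨hx.1, (ridge_facts hE hx).2.1⟩
    · rintro ⟨hxP, hxI⟩
      have h1 := bp_sum_le hE hxP F
      have h2 := bp_sum_le hE hxP L
      have hxE := bp_sum_univ hxP
      have hsum : ∑ i ∈ F ∪ L, x i + ∑ i ∈ F ∩ L, x i = ∑ i ∈ F, x i + ∑ i ∈ L, x i :=
        Finset.sum_union_inter
      have hUuniv : F ∪ L = Finset.univ := hU.trans hE
      rw [hUuniv] at hsum
      have hmod' := hmod
      rw [hU] at hmod'
      have hmodR : (M.r F : ℝ) + (M.r L : ℝ) = (M.r M.E : ℝ) + (M.r (F ∩ L) : ℝ) := by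
        exact_mod_cast hmod'
      exact ⟨hxP, by linarith, by linarith⟩
  refine ⟨?_, mor1, mor2⟩
  by_cases hFL : F ⊆ L
  · have hss : F ⊂ L := Finset.ssubset_iff_subset_ne.mpr ⟨hFL, hne⟩
    refine Or.inr (Or.inr (Or.inl ⟨?_, ?_, hss, fun h => lt_irrefl F (hss.trans h)⟩))
    · rw [Finset.inter_eq_left.mpr hFL]; exact hFne
    · rw [Finset.union_eq_right.mpr hFL]; exact hLneE
  by_cases hLF : L ⊆ F
  · have hss : L ⊂ F := Finset.ssubset_iff_subset_ne.mpr ⟨hLF, hne.symm⟩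
    refine Or.inr (Or.inr (Or.inr ⟨?_, ?_, fun h => lt_irrefl L (hss.trans h), hss⟩))
    · rw [Finset.inter_eq_right.mpr hLF]; exact hLne
    · rw [Finset.union_eq_left.mpr hLF]; exact hFneE
  have hnss1 : ¬ F ⊂ L := fun h => hFL h.subset
  have hnss2 : ¬ L ⊂ F := fun h => hLF h.subset
  by_cases hI : F ∩ L = ∅
  · exact Or.inl ⟨hI, fun hU => exclA ⟨hI, hU⟩, hnss1, hnss2⟩
  by_cases hU : F ∪ L = M.E
  · exact Or.inr (Or.inl ⟨hI, hU, hnss1, hnss2⟩)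
  · exact absurd (crossing_dim hE hdim hI hU hFL hLF) id
end

section
/- Let M be a connected matroid of rank 3 on a finite set S. Then M has two distinct proper flats F, L ⊊ S with F ∩ L ≠ ∅ and F ∪ L = S if and only if M has a rank-1 flat T such that the contraction M/T is disconnected. Moreover, when they exist, such a pair {F, L} and such a flat T are unique, T = F ∩ L, the flats F and L have rank 2, and F and L are non-degenerate. -/
open Finset

namespace FinMatroid

variable {α : Type*} [DecidableEq α] {M : FinMatroid α}

lemma aux_r_empty (M : FinMatroid α) : M.r ∅ = 0 :=
  Nat.le_zero.mp (by simpa using M.r_le_card (Finset.empty_subset M.E))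

lemma aux_flat_subsetE {F : Finset α} (hF : M.Flat F) : F ⊆ M.E := by
  rw [hF]; exact filter_subset _ _

lemma aux_flat_mem_iff {F : Finset α} (hF : M.Flat F) {s : α} :
    s ∈ F ↔ s ∈ M.E ∧ M.r (F ∪ {s}) = M.r F := by
  conv_lhs => rw [hF]
  simp only [mem_filter]

lemma aux_absorb {F X : Finset α} (hF : M.Flat F) (hXF : X ⊆ F) {s : α}
    (hs : s ∈ M.E) (h : M.r (X ∪ {s}) = M.r X) : s ∈ F := by
  have hFE := aux_flat_subsetE hF
  have hsS : {s} ⊆ M.E := singleton_subset_iff.mpr hs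
  have hsub := M.r_submod hFE (union_subset (hXF.trans hFE) hsS)
  have e1 : F ∪ (X ∪ {s}) = F ∪ {s} := by
    ext x
    simp only [mem_union, mem_singleton]
    constructor
    · rintro (h' | h' | h')
      · exact Or.inl h'
      · exact Or.inl (hXF h')
      · exact Or.inr h'
    · tauto
  have h2 : M.r X ≤ M.r (F ∩ (X ∪ {s})) :=
    M.r_mono (fun x hx => mem_inter.mpr ⟨hXF hx, mem_union_left _ hx⟩)
      (inter_subset_left.trans hFE)
  rw [e1] at hsub
  have h3 : M.r F ≤ M.r (F ∪ {s}) := M.r_mono subset_union_left (union_subset hFE hsS)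
  exact (aux_flat_mem_iff hF).mpr ⟨hs, by omega⟩

lemma aux_flat_sub {F G X : Finset α} (hF : M.Flat F) (hG : M.Flat G)
    (hXF : X ⊆ F) (hXG : X ⊆ G) (h : M.r X = M.r F) : F ⊆ G := by
  intro s hs
  have hsE : s ∈ M.E := aux_flat_subsetE hF hs
  refine aux_absorb hG hXG hsE ?_
  have h1 : M.r X ≤ M.r (X ∪ {s}) :=
    M.r_mono subset_union_left
      (union_subset (hXF.trans (aux_flat_subsetE hF)) (singleton_subset_iff.mpr hsE))
  have h2 : M.r (X ∪ {s}) ≤ M.r F :=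
    M.r_mono (union_subset hXF (singleton_subset_iff.mpr hs)) (aux_flat_subsetE hF)
  omega

lemma aux_flat_eq {F G X : Finset α} (hF : M.Flat F) (hG : M.Flat G)
    (hXF : X ⊆ F) (hXG : X ⊆ G) (hf : M.r X = M.r F) (hg : M.r X = M.r G) : F = G :=
  Finset.Subset.antisymm (aux_flat_sub hF hG hXF hXG hf) (aux_flat_sub hG hF hXG hXF hg)

lemma aux_flat_inter {F L : Finset α} (hF : M.Flat F) (hL : M.Flat L) :
    M.Flat (F ∩ L) := by
  unfold Flat
  apply Finset.Subset.antisymm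
  · intro s hs
    simp only [mem_filter]
    refine ⟨aux_flat_subsetE hF (mem_inter.mp hs).1, ?_⟩
    rw [union_eq_left.mpr (singleton_subset_iff.mpr hs)]
  · intro s hs
    simp only [mem_filter] at hs
    exact mem_inter.mpr ⟨aux_absorb hF inter_subset_left hs.1 hs.2,
      aux_absorb hL inter_subset_right hs.1 hs.2⟩

lemma aux_loopless (hconn : M.Connected) (hrank : M.r M.E = 3) {s : α} (hs : s ∈ M.E) :
    M.r {s} = 1 := by
  have hsS : {s} ⊆ M.E := singleton_subset_iff.mpr hs
  have h1 : M.r {s} ≤ 1 := by simpa using M.r_le_card hsS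
  rcases Nat.lt_or_ge (M.r {s}) 1 with h0 | h2
  · exfalso
    have hsub := M.r_submod (sdiff_subset : M.E \ {s} ⊆ M.E) hsS
    have e1 : M.E \ {s} ∪ {s} = M.E := by
      ext x
      simp only [mem_union, mem_sdiff, mem_singleton]
      constructor
      · rintro (h' | h')
        · exact h'.1
        · exact h' ▸ hs
      · intro h'
        by_cases hx : x = s <;> tauto
    have e2 : (M.E \ {s}) ∩ {s} = ∅ := by
      ext x; simp
    rw [e1, e2, aux_r_empty] at hsub
    have hle : M.r (M.E \ {s}) ≤ M.r M.E := M.r_mono sdiff_subset Finset.Subset.rfl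
    have hsep : M.Separator {s} := ⟨hsS, by omega⟩
    rcases hconn.2 _ hsep with h | h
    · exact (singleton_ne_empty s) h
    · have : M.r M.E ≤ 1 := h ▸ h1
      omega
  · omega

lemma aux_r_pos (hconn : M.Connected) (hrank : M.r M.E = 3) {A : Finset α}
    (hA : A ⊆ M.E) (hne : A ≠ ∅) : 1 ≤ M.r A := by
  obtain ⟨a, ha⟩ := nonempty_iff_ne_empty.mpr hne
  have := aux_loopless hconn hrank (hA ha)
  have h2 : M.r {a} ≤ M.r A := M.r_mono (singleton_subset_iff.mpr ha) hA
  omega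

lemma aux_proper_flat (hrank : M.r M.E = 3) {F : Finset α} (hF : M.Flat F)
    (hne : F ≠ M.E) : M.r F ≤ 2 := by
  by_contra h
  push_neg at h
  apply hne
  refine Finset.Subset.antisymm (aux_flat_subsetE hF) (fun s hs => ?_)
  refine (aux_flat_mem_iff hF).mpr ⟨hs, ?_⟩
  have hu : F ∪ {s} ⊆ M.E :=
    union_subset (aux_flat_subsetE hF) (singleton_subset_iff.mpr hs)
  have h1 := M.r_mono (subset_union_left : F ⊆ F ∪ {s}) hu
  have h2 := M.r_mono hu Finset.Subset.rfl
  omega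

lemma aux_contract_E (M : FinMatroid α) (T : Finset α) : (M.contract T).E = M.E \ T := rfl

lemma aux_contract_r (M : FinMatroid α) {T : Finset α} (hT : T ⊆ M.E) (A : Finset α) :
    (M.contract T).r A = M.r (A ∪ T) - M.r T := by
  show M.r (A ∪ T ∩ M.E) - M.r (T ∩ M.E) = _
  rw [inter_eq_left.mpr hT]

lemma aux_restrict_E (M : FinMatroid α) (A : Finset α) : (M.restrict A).E = A ∩ M.E := rfl

lemma aux_restrict_r (M : FinMatroid α) (A : Finset α) : (M.restrict A).r = M.r := rfl

lemma aux_pair_ranks (hconn : M.Connected) (hrank : M.r M.E = 3) {F L : Finset α}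
    (hF : M.Flat F) (hL : M.Flat L) (hFE : F ≠ M.E) (hLE : L ≠ M.E)
    (hne : F ∩ L ≠ ∅) (hcov : F ∪ L = M.E) :
    M.r F = 2 ∧ M.r L = 2 ∧ M.r (F ∩ L) = 1 := by
  have h2F := aux_proper_flat hrank hF hFE
  have h2L := aux_proper_flat hrank hL hLE
  have hsub := M.r_submod (aux_flat_subsetE hF) (aux_flat_subsetE hL)
  rw [hcov, hrank] at hsub
  have h1 := aux_r_pos hconn hrank (inter_subset_left.trans (aux_flat_subsetE hF)) hne
  omega

lemma aux_forward (hconn : M.Connected) (hrank : M.r M.E = 3) {F L : Finset α}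
    (hF : M.Flat F) (hL : M.Flat L) (hFE : F ≠ M.E) (hLE : L ≠ M.E)
    (hne : F ∩ L ≠ ∅) (hcov : F ∪ L = M.E) :
    M.Flat (F ∩ L) ∧ M.r (F ∩ L) = 1 ∧ ¬ (M.contract (F ∩ L)).Connected := by
  obtain ⟨hrF, hrL, hrT⟩ := aux_pair_ranks hconn hrank hF hL hFE hLE hne hcov
  have hFsub := aux_flat_subsetE hF
  have hLsub := aux_flat_subsetE hL
  set T := F ∩ L with hTdef
  have hTE : T ⊆ M.E := inter_subset_left.trans hFsub
  have hcov' : ∀ x, x ∈ M.E → x ∈ F ∨ x ∈ L := fun x hx => mem_union.mp (hcov ▸ hx)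
  refine ⟨aux_flat_inter hF hL, hrT, ?_⟩
  rintro ⟨-, hsep⟩
  have e0 : (F \ L) ∪ T = F := by
    ext x; simp only [mem_union, mem_sdiff, hTdef, mem_inter]; tauto
  have e1 : (M.E \ T) \ (F \ L) = M.E \ F := by
    ext x; simp only [mem_sdiff, hTdef, mem_inter, not_and, not_not]
    constructor
    · rintro ⟨⟨hxE, hxT⟩, hxFL⟩
      exact ⟨hxE, fun hxF => hxT hxF (hxFL hxF)⟩
    · rintro ⟨hxE, hxF⟩
      exact ⟨⟨hxE, fun h => absurd h hxF⟩, fun h => absurd h hxF⟩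
  have e2 : (M.E \ F) ∪ T = L := by
    ext x; simp only [mem_union, mem_sdiff, hTdef, mem_inter]
    constructor
    · rintro (⟨hxE, hxF⟩ | ⟨_, hxL⟩)
      · rcases hcov' x hxE with h | h
        · exact absurd h hxF
        · exact h
      · exact hxL
    · intro hxL
      by_cases hxF : x ∈ F
      · exact Or.inr ⟨hxF, hxL⟩
      · exact Or.inl ⟨hLsub hxL, hxF⟩
  have e3 : (M.E \ T) ∪ T = M.E := sdiff_union_of_subset hTE
  have hFLsub : F \ L ⊆ M.E \ T := by
    intro x hx
    rw [mem_sdiff] at hx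
    rw [mem_sdiff, hTdef, mem_inter]
    exact ⟨hFsub hx.1, fun h => hx.2 h.2⟩
  have hsep' : (M.contract T).Separator (F \ L) := by
    refine ⟨hFLsub, ?_⟩
    rw [aux_contract_E, aux_contract_r M hTE, aux_contract_r M hTE, aux_contract_r M hTE,
      e0, e1, e2, e3, hrF, hrL, hrT, hrank]
  rcases hsep (F \ L) hsep' with h | h
  · apply hLE
    have hsubFL : F ⊆ L := sdiff_eq_empty_iff_subset.mp h
    rw [← hcov, union_eq_right.mpr hsubFL]
  · apply hFE
    have hsubLF : L ⊆ F := by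
      intro x hx
      by_contra hxF
      have hx2 : x ∈ M.E \ T := by
        rw [mem_sdiff, hTdef, mem_inter]
        exact ⟨hLsub hx, fun h' => hxF h'.1⟩
      rw [aux_contract_E] at h
      rw [← h, mem_sdiff] at hx2
      exact hxF hx2.1
    rw [← hcov, union_eq_left.mpr hsubLF]

lemma aux_backward (hconn : M.Connected) (hrank : M.r M.E = 3) {T : Finset α}
    (hT : M.Flat T) (hrT : M.r T = 1) (hdis : ¬ (M.contract T).Connected) :
    ∃ F L : Finset α, M.Flat F ∧ M.Flat L ∧ M.r F = 2 ∧ M.r L = 2 ∧ F ∩ L = T ∧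
      F ∪ L = M.E ∧ F ≠ M.E ∧ L ≠ M.E ∧ F ≠ L ∧ F ∩ L ≠ ∅ := by
  have hTE := aux_flat_subsetE hT
  have hgne : (M.E \ T).Nonempty := by
    rw [sdiff_nonempty]
    intro h
    have : T = M.E := Finset.Subset.antisymm hTE h
    rw [this, hrank] at hrT
    omega
  have hkey : ∀ X : Finset α, X ⊆ M.E \ T → X ≠ ∅ → 2 ≤ M.r (X ∪ T) := by
    intro X hX hXne
    obtain ⟨a, ha⟩ := nonempty_iff_ne_empty.mpr hXne
    have haE : a ∈ M.E := (mem_sdiff.mp (hX ha)).1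
    have haT : a ∉ T := (mem_sdiff.mp (hX ha)).2
    have h1 : M.r (T ∪ {a}) ≠ M.r T := by
      intro h
      exact haT ((aux_flat_mem_iff hT).mpr ⟨haE, h⟩)
    have hsub1 : T ∪ {a} ⊆ X ∪ T := by
      intro x hx
      rcases mem_union.mp hx with h | h
      · exact mem_union_right _ h
      · exact mem_union_left _ (mem_singleton.mp h ▸ ha)
    have hXT : X ∪ T ⊆ M.E := union_subset (hX.trans sdiff_subset) hTE
    have h2 : M.r (T ∪ {a}) ≤ M.r (X ∪ T) := M.r_mono hsub1 hXT
    have h3 : M.r T ≤ M.r (T ∪ {a}) :=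
      M.r_mono subset_union_left ((union_subset hTE (singleton_subset_iff.mpr haE)))
    omega
  have hforall : ¬ ∀ A : Finset α, (M.contract T).Separator A → A = ∅ ∨ A = (M.contract T).E :=
    fun h => hdis ⟨hgne, h⟩
  push_neg at hforall
  obtain ⟨A, hsepA, hAne, hAnE⟩ := hforall
  obtain ⟨hAsub, heq⟩ := hsepA
  rw [aux_contract_E] at hAsub hAnE
  set B := (M.E \ T) \ A with hB
  have hBne : B ≠ ∅ := by
    intro h
    exact hAnE (Finset.Subset.antisymm hAsub (sdiff_eq_empty_iff_subset.mp h))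
  have hBsub : B ⊆ M.E \ T := sdiff_subset
  have hrAT : M.r (A ∪ T) = 2 ∧ M.r (B ∪ T) = 2 := by
    rw [aux_contract_E, aux_contract_r M hTE, aux_contract_r M hTE, aux_contract_r M hTE,
      sdiff_union_of_subset hTE, hrank, hrT, ← hB] at heq
    have h1 := hkey A hAsub (nonempty_iff_ne_empty.mp hAne)
    have h2 := hkey B hBsub hBne
    have b1 : M.r (A ∪ T) ≤ 3 :=
      hrank ▸ M.r_mono (union_subset (hAsub.trans sdiff_subset) hTE) Finset.Subset.rfl
    have b2 : M.r (B ∪ T) ≤ 3 :=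
      hrank ▸ M.r_mono (union_subset (hBsub.trans sdiff_subset) hTE) Finset.Subset.rfl
    constructor <;> omega
  have hflat : ∀ X Y : Finset α, X ∪ Y = M.E \ T → (∀ x, x ∈ X → x ∉ Y) →
      M.r (X ∪ T) = 2 → M.r (Y ∪ T) = 2 → M.Flat (X ∪ T) := by
    intro X Y hXY hd hX2 hY2
    have hXsub : X ⊆ M.E \ T := hXY ▸ subset_union_left
    have hYsub : Y ⊆ M.E \ T := hXY ▸ subset_union_right
    have hXTsub : X ∪ T ⊆ M.E := union_subset (hXsub.trans sdiff_subset) hTE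
    have hYTsub : Y ∪ T ⊆ M.E := union_subset (hYsub.trans sdiff_subset) hTE
    unfold Flat
    apply Finset.Subset.antisymm
    · intro s hs
      simp only [mem_filter]
      exact ⟨hXTsub hs, by rw [union_eq_left.mpr (singleton_subset_iff.mpr hs)]⟩
    · intro s hs
      simp only [mem_filter] at hs
      obtain ⟨hsE, hr⟩ := hs
      by_contra hsX
      have hsY : s ∈ Y := by
        have hsT : s ∉ T := fun h => hsX (mem_union_right _ h)
        have : s ∈ X ∪ Y := by rw [hXY, mem_sdiff]; exact ⟨hsE, hsT⟩
        rcases mem_union.mp this with h | h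
        · exact absurd (mem_union_left _ h) hsX
        · exact h
      have hsub := M.r_submod (union_subset hXTsub (singleton_subset_iff.mpr hsE)) hYTsub
      have e1 : ((X ∪ T) ∪ {s}) ∪ (Y ∪ T) = M.E := by
        have e0 : (X ∪ Y) ∪ T = M.E := by rw [hXY, sdiff_union_of_subset hTE]
        rw [← e0]
        ext x
        simp only [mem_union, mem_singleton]
        constructor
        · rintro (((h | h) | rfl) | (h | h))
          · exact Or.inl (Or.inl h)
          · exact Or.inr h
          · exact Or.inl (Or.inr hsY)
          · exact Or.inl (Or.inr h)
          · exact Or.inr h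
        · tauto
      have e2 : ((X ∪ T) ∪ {s}) ∩ (Y ∪ T) = T ∪ {s} := by
        ext x
        simp only [mem_union, mem_inter, mem_singleton]
        constructor
        · rintro ⟨(h1 | h1) | h1, h2 | h2⟩
          · exact absurd h2 (hd x h1)
          · exact Or.inl h2
          · exact Or.inl h1
          · exact Or.inl h1
          · exact Or.inr h1
          · exact Or.inr h1
        · rintro (h | h)
          · exact ⟨Or.inl (Or.inr h), Or.inr h⟩
          · exact ⟨Or.inr h, Or.inl (h ▸ hsY)⟩
      rw [e1, e2, hr, hX2, hY2, hrank] at hsub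
      have hkey2 : 2 ≤ M.r ({s} ∪ T) := by
        refine hkey {s} ?_ (singleton_ne_empty s)
        rw [singleton_subset_iff, mem_sdiff]
        exact ⟨hsE, fun h => hsX (mem_union_right _ h)⟩
      rw [union_comm] at hkey2
      omega
  have hdisjBA : ∀ x, x ∈ B → x ∉ A := fun x hx => (mem_sdiff.mp hx).2
  have hABcov : A ∪ B = M.E \ T := by
    ext x
    simp only [mem_union, hB, mem_sdiff]
    constructor
    · rintro (h | h)
      · exact mem_sdiff.mp (hAsub h)
      · exact h.1
    · intro h
      by_cases hx : x ∈ A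
      · exact Or.inl hx
      · exact Or.inr ⟨h, hx⟩
  have hBAcov : B ∪ A = M.E \ T := by rw [union_comm]; exact hABcov
  have hdisjAB : ∀ x, x ∈ A → x ∉ B := fun x hx h => hdisjBA x h hx
  have hFflat := hflat A B hABcov hdisjAB hrAT.1 hrAT.2
  have hLflat := hflat B A hBAcov hdisjBA hrAT.2 hrAT.1
  have hintT : (A ∪ T) ∩ (B ∪ T) = T := by
    ext x
    simp only [mem_inter, mem_union]
    constructor
    · rintro ⟨h1 | h1, h2 | h2⟩
      · exact absurd h2 (hdisjAB x h1)
      · exact h2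
      · exact h1
      · exact h1
    · intro h; exact ⟨Or.inr h, Or.inr h⟩
  have hunE : (A ∪ T) ∪ (B ∪ T) = M.E := by
    have e0 : (A ∪ B) ∪ T = M.E := by rw [hABcov, sdiff_union_of_subset hTE]
    rw [← e0]
    ext x
    simp only [mem_union]
    tauto
  refine ⟨A ∪ T, B ∪ T, hFflat, hLflat, hrAT.1, hrAT.2, hintT, hunE, ?_, ?_, ?_, ?_⟩
  · intro h
    rw [h, hrank] at hrAT
    omega
  · intro h
    rw [h, hrank] at hrAT
    omega
  · intro h
    rw [h, inter_self] at hintT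
    rw [hintT, hrT] at hrAT
    omega
  · rw [hintT]
    intro h
    rw [h, aux_r_empty] at hrT
    omega

lemma aux_core (hconn : M.Connected) (hrank : M.r M.E = 3) {F L L₂ : Finset α}
    (hF : M.Flat F) (hL : M.Flat L) (hL₂ : M.Flat L₂) (hrF : M.r F = 2)
    (hrL : M.r L = 2) (hrL₂ : M.r L₂ = 2) (hcov : F ∪ L = M.E) (hcov₂ : F ∪ L₂ = M.E)
    (hne : F ∩ L ≠ F ∩ L₂) : False := by
  have hFsub := aux_flat_subsetE hF
  have hLsub := aux_flat_subsetE hL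
  have hL₂sub := aux_flat_subsetE hL₂
  have hLL₂ : L ≠ L₂ := fun h => hne (h ▸ rfl)
  have h1 : M.r (L ∩ L₂) ≤ 1 := by
    by_contra h
    push_neg at h
    have hle : M.r (L ∩ L₂) ≤ 2 := hrL ▸ M.r_mono inter_subset_left hLsub
    exact hLL₂ (aux_flat_eq hL hL₂ inter_subset_left inter_subset_right
      (by omega) (by omega))
  have hsubF : M.E \ F ⊆ L ∩ L₂ := by
    intro x hx
    rw [mem_sdiff] at hx
    rw [mem_inter]
    constructor
    · rcases mem_union.mp (hcov ▸ hx.1) with h | h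
      · exact absurd h hx.2
      · exact h
    · rcases mem_union.mp (hcov₂ ▸ hx.1) with h | h
      · exact absurd h hx.2
      · exact h
  have h2 : M.r (M.E \ F) ≤ 1 :=
    le_trans (M.r_mono hsubF (inter_subset_left.trans hLsub)) h1
  have hsub := M.r_submod hFsub (sdiff_subset : M.E \ F ⊆ M.E)
  rw [union_sdiff_of_subset hFsub, inter_sdiff_self, aux_r_empty, hrank] at hsub
  have hsep : M.Separator F := ⟨hFsub, by omega⟩
  rcases hconn.2 F hsep with h | h
  · rw [h, aux_r_empty] at hrF; omega
  · rw [h, hrank] at hrF; omega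

lemma aux_mem_pair (hrank : M.r M.E = 3) {F L F' : Finset α}
    (hF : M.Flat F) (hL : M.Flat L) (hF' : M.Flat F') (hrF : M.r F = 2)
    (hrL : M.r L = 2) (hrF' : M.r F' = 2) (hcov : F ∪ L = M.E)
    (hrT : M.r (F ∩ L) = 1) (hTF' : F ∩ L ⊆ F') : F' = F ∨ F' = L := by
  have hFsub := aux_flat_subsetE hF
  have hLsub := aux_flat_subsetE hL
  have hF'sub := aux_flat_subsetE hF'
  have hsub := M.r_submod (inter_subset_left.trans hF'sub : F' ∩ F ⊆ M.E)
    (inter_subset_left.trans hF'sub : F' ∩ L ⊆ M.E)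
  have e1 : (F' ∩ F) ∪ (F' ∩ L) = F' := by
    rw [← inter_union_distrib_left, hcov, inter_eq_left.mpr hF'sub]
  have e2 : (F' ∩ F) ∩ (F' ∩ L) = F ∩ L := by
    ext x
    simp only [mem_inter]
    constructor
    · rintro ⟨⟨-, h1⟩, ⟨-, h2⟩⟩
      exact ⟨h1, h2⟩
    · intro hx
      exact ⟨⟨hTF' (mem_inter.mpr hx), hx.1⟩, ⟨hTF' (mem_inter.mpr hx), hx.2⟩⟩
  rw [e1, e2, hrF', hrT] at hsub
  have b1 : M.r (F' ∩ F) ≤ 2 := hrF ▸ M.r_mono inter_subset_right hFsub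
  have b2 : M.r (F' ∩ L) ≤ 2 := hrL ▸ M.r_mono inter_subset_right hLsub
  rcases (by omega : M.r (F' ∩ F) = 2 ∨ M.r (F' ∩ L) = 2) with h | h
  · exact Or.inl (aux_flat_eq hF' hF inter_subset_left inter_subset_right
      (by omega) (by omega))
  · exact Or.inr (aux_flat_eq hF' hL inter_subset_left inter_subset_right
      (by omega) (by omega))

lemma aux_uniqueT (hconn : M.Connected) (hrank : M.r M.E = 3) {T T' : Finset α}
    (hT : M.Flat T) (hrT : M.r T = 1) (hd : ¬ (M.contract T).Connected)
    (hT' : M.Flat T') (hrT' : M.r T' = 1) (hd' : ¬ (M.contract T').Connected) :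
    T = T' := by
  by_contra hne
  obtain ⟨F, L, hF, hL, hrF, hrL, hFL, hcov, -, -, -, -⟩ :=
    aux_backward hconn hrank hT hrT hd
  obtain ⟨F', L', hF', hL', hrF', hrL', hFL', hcov', -, -, -, -⟩ :=
    aux_backward hconn hrank hT' hrT' hd'
  have key : ∀ G H : Finset α, M.Flat G → M.Flat H → M.r G = 2 → M.r H = 2 →
      G ∩ H = T → G ∪ H = M.E → T' ⊆ G → False := by
    intro G H hG hH hrG hrH hGH hcovGH hsub
    have hmem := aux_mem_pair hrank hF' hL' hG hrF' hrL' hrG hcov'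
      (by rw [hFL']; exact hrT') (by rw [hFL']; exact hsub)
    rcases hmem with h | h
    · refine aux_core hconn hrank hG hH hL' hrG hrH hrL' hcovGH (by rw [h]; exact hcov') ?_
      rw [hGH, h, hFL']
      exact hne
    · refine aux_core hconn hrank hG hH hF' hrG hrH hrF' hcovGH
        (by rw [h, union_comm]; exact hcov') ?_
      rw [hGH, h, inter_comm, hFL']
      exact hne
  have hT'ne : T' ≠ ∅ := by
    intro h
    rw [h, aux_r_empty] at hrT'
    omega
  obtain ⟨t', ht'⟩ := nonempty_iff_ne_empty.mpr hT'ne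
  have ht'E : t' ∈ M.E := aux_flat_subsetE hT' ht'
  have hloop : M.r {t'} = 1 := aux_loopless hconn hrank ht'E
  rcases mem_union.mp (hcov ▸ ht'E) with h | h
  · exact key F L hF hL hrF hrL hFL hcov
      (aux_flat_sub hT' hF (singleton_subset_iff.mpr ht') (singleton_subset_iff.mpr h)
        (by omega))
  · exact key L F hL hF hrL hrF (by rw [inter_comm]; exact hFL)
      (by rw [union_comm]; exact hcov)
      (aux_flat_sub hT' hL (singleton_subset_iff.mpr ht') (singleton_subset_iff.mpr h)
        (by omega))

lemma aux_contract_conn (hrank : M.r M.E = 3) {F : Finset α}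
    (hF : M.Flat F) (hrF : M.r F = 2) (hFE : F ≠ M.E) : (M.contract F).Connected := by
  have hFsub := aux_flat_subsetE hF
  have hgne : (M.E \ F).Nonempty :=
    sdiff_nonempty.mpr (fun h => hFE (Finset.Subset.antisymm hFsub h))
  have hkey : ∀ X : Finset α, X ⊆ M.E \ F → X ≠ ∅ → 3 ≤ M.r (X ∪ F) := by
    intro X hX hXne
    obtain ⟨a, ha⟩ := nonempty_iff_ne_empty.mpr hXne
    have haE : a ∈ M.E := (mem_sdiff.mp (hX ha)).1
    have haF : a ∉ F := (mem_sdiff.mp (hX ha)).2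
    have h1 : M.r (F ∪ {a}) ≠ M.r F := fun h => haF ((aux_flat_mem_iff hF).mpr ⟨haE, h⟩)
    have hsub1 : F ∪ {a} ⊆ X ∪ F := by
      intro x hx
      rcases mem_union.mp hx with h | h
      · exact mem_union_right _ h
      · exact mem_union_left _ (mem_singleton.mp h ▸ ha)
    have hXF : X ∪ F ⊆ M.E := union_subset (hX.trans sdiff_subset) hFsub
    have h2 : M.r (F ∪ {a}) ≤ M.r (X ∪ F) := M.r_mono hsub1 hXF
    have h3 : M.r F ≤ M.r (F ∪ {a}) :=
      M.r_mono subset_union_left (union_subset hFsub (singleton_subset_iff.mpr haE))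
    omega
  refine ⟨hgne, ?_⟩
  intro A hA
  obtain ⟨hAsub, heq⟩ := hA
  rw [aux_contract_E] at hAsub
  by_contra hcon
  push_neg at hcon
  obtain ⟨hAne, hAnE⟩ := hcon
  rw [aux_contract_E] at hAnE
  set B := (M.E \ F) \ A with hB
  have hBne : B ≠ ∅ := fun h =>
    hAnE (Finset.Subset.antisymm hAsub (sdiff_eq_empty_iff_subset.mp h))
  rw [aux_contract_E, aux_contract_r M hFsub, aux_contract_r M hFsub,
    aux_contract_r M hFsub, sdiff_union_of_subset hFsub, hrank, hrF, ← hB] at heq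
  have h1 := hkey A hAsub (nonempty_iff_ne_empty.mp hAne)
  have h2 := hkey B sdiff_subset hBne
  have b1 : M.r (A ∪ F) ≤ 3 :=
    hrank ▸ M.r_mono (union_subset (hAsub.trans sdiff_subset) hFsub) Finset.Subset.rfl
  have b2 : M.r (B ∪ F) ≤ 3 :=
    hrank ▸ M.r_mono (union_subset ((sdiff_subset : B ⊆ M.E \ F).trans sdiff_subset) hFsub)
      Finset.Subset.rfl
  omega

lemma aux_restrict_conn (hconn : M.Connected) (hrank : M.r M.E = 3) {F L : Finset α}
    (hF : M.Flat F) (hL : M.Flat L) (hrF : M.r F = 2) (hrL : M.r L = 2)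
    (hcov : F ∪ L = M.E) (hrT : M.r (F ∩ L) = 1) : (M.restrict F).Connected := by
  have hFsub := aux_flat_subsetE hF
  have hLsub := aux_flat_subsetE hL
  have hFE' : F ∩ M.E = F := inter_eq_left.mpr hFsub
  have hTsub : F ∩ L ⊆ M.E := inter_subset_left.trans hFsub
  have hT : M.Flat (F ∩ L) := aux_flat_inter hF hL
  have hFne : F ≠ ∅ := by
    intro h
    rw [h, aux_r_empty] at hrF
    omega
  constructor
  · show (F ∩ M.E).Nonempty
    rw [hFE']
    exact nonempty_iff_ne_empty.mpr hFne
  · intro A hA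
    obtain ⟨hAsub, heq⟩ := hA
    rw [aux_restrict_E, hFE'] at hAsub
    rw [aux_restrict_E, aux_restrict_r, hFE'] at heq
    by_contra hcon
    push_neg at hcon
    obtain ⟨hAne, hAnE⟩ := hcon
    rw [aux_restrict_E, hFE'] at hAnE
    have hFAne : F \ A ≠ ∅ := fun h =>
      hAnE (Finset.Subset.antisymm hAsub (sdiff_eq_empty_iff_subset.mp h))
    have h1 : 1 ≤ M.r A := aux_r_pos hconn hrank (hAsub.trans hFsub) (nonempty_iff_ne_empty.mp hAne)
    have h2 : 1 ≤ M.r (F \ A) :=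
      aux_r_pos hconn hrank ((sdiff_subset : F \ A ⊆ F).trans hFsub) hFAne
    rw [hrF] at heq
    have hrA : M.r A = 1 := by omega
    have hrFA : M.r (F \ A) = 1 := by omega
    -- T is nonempty; pick t ∈ T = F ∩ L
    have hTne : F ∩ L ≠ ∅ := by
      intro h
      rw [h, aux_r_empty] at hrT
      omega
    obtain ⟨t, ht⟩ := nonempty_iff_ne_empty.mpr hTne
    -- the main contradiction helper
    have hfin : ∀ X : Finset α, X ⊆ F → M.r X = 1 → M.r (F \ X) = 1 → t ∈ X → False := by
      intro X hXF hrX hrFX htX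
      have hXE : X ⊆ M.E := hXF.trans hFsub
      -- X ⊆ F ∩ L
      have hsubm := M.r_submod hXE hTsub
      have hXTpos : 1 ≤ M.r (X ∩ (F ∩ L)) :=
        aux_r_pos hconn hrank (inter_subset_right.trans hTsub)
          (nonempty_iff_ne_empty.mp ⟨t, mem_inter.mpr ⟨htX, ht⟩⟩)
      rw [hrX, hrT] at hsubm
      have hXT : X ⊆ F ∩ L := by
        intro a ha
        refine aux_absorb hT Finset.Subset.rfl (hXE ha) ?_
        have e1 : M.r (F ∩ L) ≤ M.r ((F ∩ L) ∪ {a}) :=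
          M.r_mono subset_union_left
            (union_subset hTsub (singleton_subset_iff.mpr (hXE ha)))
        have e2 : (F ∩ L) ∪ {a} ⊆ X ∪ (F ∩ L) := by
          intro x hx
          rcases mem_union.mp hx with h | h
          · exact mem_union_right _ h
          · exact mem_union_left _ (mem_singleton.mp h ▸ ha)
        have e3 : M.r ((F ∩ L) ∪ {a}) ≤ M.r (X ∪ (F ∩ L)) :=
          M.r_mono e2 (union_subset hXE hTsub)
        omega
      -- F \ X is a separator of M
      have hFXsub : F \ X ⊆ M.E := (sdiff_subset : F \ X ⊆ F).trans hFsub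
      have hcompl : M.E \ (F \ X) ⊆ L := by
        intro x hx
        rw [mem_sdiff, mem_sdiff, not_and, not_not] at hx
        by_cases hxF : x ∈ F
        · exact (mem_inter.mp (hXT (hx.2 hxF))).2
        · rcases mem_union.mp (hcov ▸ hx.1) with h | h
          · exact absurd h hxF
          · exact h
      have hc2 : M.r (M.E \ (F \ X)) ≤ 2 := hrL ▸ M.r_mono hcompl hLsub
      have hsub2 := M.r_submod hFXsub (sdiff_subset : M.E \ (F \ X) ⊆ M.E)
      rw [union_sdiff_of_subset hFXsub, inter_sdiff_self, aux_r_empty, hrank, hrFX] at hsub2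
      have hsep : M.Separator (F \ X) := ⟨hFXsub, by rw [hrFX]; omega⟩
      rcases hconn.2 _ hsep with h | h
      · rw [h, aux_r_empty] at hrFX
        omega
      · rw [h, hrank] at hrFX
        omega
    have htF : t ∈ F := (mem_inter.mp ht).1
    by_cases htA : t ∈ A
    · exact hfin A hAsub hrA hrFA htA
    · refine hfin (F \ A) (sdiff_subset : F \ A ⊆ F) hrFA ?_ (mem_sdiff.mpr ⟨htF, htA⟩)
      rw [sdiff_sdiff_self_left, inter_eq_right.mpr hAsub]
      exact hrA

end FinMatroid

/-- A connected rank-3 matroid has two distinct proper flats `F, L` with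
`F ∩ L ≠ ∅` and `F ∪ L = S` iff it has a rank-1 flat `T` with `M/T` disconnected; these
flats are unique, `T = F ∩ L`, `F` and `L` have rank 2, and `F, L` are non-degenerate. -/
theorem statement13 {α : Type*} [DecidableEq α] (M : FinMatroid α)
    (hconn : M.Connected) (hrank : M.r M.E = 3) :
    ((∃ F L : Finset α, M.Flat F ∧ M.Flat L ∧ F ≠ L ∧ F ≠ M.E ∧ L ≠ M.E ∧
        F ∩ L ≠ ∅ ∧ F ∪ L = M.E) ↔
      (∃ T : Finset α, M.Flat T ∧ M.r T = 1 ∧ ¬ (M.contract T).Connected)) ∧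
    (∀ F L F' L' : Finset α,
      (M.Flat F ∧ M.Flat L ∧ F ≠ L ∧ F ≠ M.E ∧ L ≠ M.E ∧ F ∩ L ≠ ∅ ∧ F ∪ L = M.E) →
      (M.Flat F' ∧ M.Flat L' ∧ F' ≠ L' ∧ F' ≠ M.E ∧ L' ≠ M.E ∧ F' ∩ L' ≠ ∅ ∧
        F' ∪ L' = M.E) →
      ((F = F' ∧ L = L') ∨ (F = L' ∧ L = F'))) ∧
    (∀ T T' : Finset α,
      (M.Flat T ∧ M.r T = 1 ∧ ¬ (M.contract T).Connected) →
      (M.Flat T' ∧ M.r T' = 1 ∧ ¬ (M.contract T').Connected) → T = T') ∧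
    (∀ F L T : Finset α,
      (M.Flat F ∧ M.Flat L ∧ F ≠ L ∧ F ≠ M.E ∧ L ≠ M.E ∧ F ∩ L ≠ ∅ ∧ F ∪ L = M.E) →
      (M.Flat T ∧ M.r T = 1 ∧ ¬ (M.contract T).Connected) →
      T = F ∩ L ∧ M.r F = 2 ∧ M.r L = 2 ∧ M.Nondegenerate F ∧ M.Nondegenerate L) := by
  refine ⟨⟨?_, ?_⟩, ?_, ?_, ?_⟩
  · rintro ⟨F, L, hF, hL, hFL, hFE, hLE, hne, hcov⟩
    obtain ⟨h1, h2, h3⟩ := FinMatroid.aux_forward hconn hrank hF hL hFE hLE hne hcov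
    exact ⟨F ∩ L, h1, h2, h3⟩
  · rintro ⟨T, hT, hrT, hd⟩
    obtain ⟨F, L, hF, hL, -, -, -, hcov, hFE, hLE, hFL, hne⟩ :=
      FinMatroid.aux_backward hconn hrank hT hrT hd
    exact ⟨F, L, hF, hL, hFL, hFE, hLE, hne, hcov⟩
  · rintro F L F' L' ⟨hF, hL, hFL, hFE, hLE, hne, hcov⟩
      ⟨hF', hL', hFL', hFE', hLE', hne', hcov'⟩
    obtain ⟨hTf, hrTf, hdf⟩ := FinMatroid.aux_forward hconn hrank hF hL hFE hLE hne hcov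
    obtain ⟨hTf', hrTf', hdf'⟩ :=
      FinMatroid.aux_forward hconn hrank hF' hL' hFE' hLE' hne' hcov'
    have hTT : F ∩ L = F' ∩ L' :=
      FinMatroid.aux_uniqueT hconn hrank hTf hrTf hdf hTf' hrTf' hdf'
    obtain ⟨hrF, hrL, hrT⟩ := FinMatroid.aux_pair_ranks hconn hrank hF hL hFE hLE hne hcov
    obtain ⟨hrF', hrL', hrT'⟩ :=
      FinMatroid.aux_pair_ranks hconn hrank hF' hL' hFE' hLE' hne' hcov'
    have hm1 : F' = F ∨ F' = L := FinMatroid.aux_mem_pair hrank hF hL hF' hrF hrL hrF'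
      hcov hrT (by rw [hTT]; exact inter_subset_left)
    have hm2 : L' = F ∨ L' = L := FinMatroid.aux_mem_pair hrank hF hL hL' hrF hrL hrL'
      hcov hrT (by rw [hTT]; exact inter_subset_right)
    rcases hm1 with h1 | h1 <;> rcases hm2 with h2 | h2
    · exact absurd (h1.trans h2.symm) hFL'
    · exact Or.inl ⟨h1.symm, h2.symm⟩
    · exact Or.inr ⟨h2.symm, h1.symm⟩
    · exact absurd (h1.trans h2.symm) hFL'
  · rintro T T' ⟨hT, hrT, hd⟩ ⟨hT', hrT', hd'⟩
    exact FinMatroid.aux_uniqueT hconn hrank hT hrT hd hT' hrT' hd'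
  · rintro F L T ⟨hF, hL, hFL, hFE, hLE, hne, hcov⟩ ⟨hT, hrT, hd⟩
    obtain ⟨hTf, hrTf, hdf⟩ := FinMatroid.aux_forward hconn hrank hF hL hFE hLE hne hcov
    have hTeq : T = F ∩ L := FinMatroid.aux_uniqueT hconn hrank hT hrT hd hTf hrTf hdf
    obtain ⟨hrF, hrL, hrT2⟩ := FinMatroid.aux_pair_ranks hconn hrank hF hL hFE hLE hne hcov
    refine ⟨hTeq, hrF, hrL, ⟨?_, ?_, ?_, ?_⟩, ⟨?_, ?_, ?_, ?_⟩⟩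
    · intro h
      rw [h, M.aux_r_empty] at hrF
      omega
    · exact Finset.ssubset_iff_subset_ne.mpr ⟨FinMatroid.aux_flat_subsetE hF, hFE⟩
    · exact FinMatroid.aux_restrict_conn hconn hrank hF hL hrF hrL hcov hrT2
    · exact FinMatroid.aux_contract_conn hrank hF hrF hFE
    · intro h
      rw [h, M.aux_r_empty] at hrL
      omega
    · exact Finset.ssubset_iff_subset_ne.mpr ⟨FinMatroid.aux_flat_subsetE hL, hLE⟩
    · exact FinMatroid.aux_restrict_conn hconn hrank hL hF hrL hrF
        (by rw [union_comm]; exact hcov) (by rw [inter_comm]; exact hrT2)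
    · exact FinMatroid.aux_contract_conn hrank hL hrL hLE
end
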